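/- arXiv:1810.05578 — 5 statements merged into one kernel-verified Lean document; each statement's English description precedes it below -/
import Mathlib

section
/- Let p be a probability vector and let S be a nonempty finite set of points (x,y) with 0 < x < Z, each lying on the graph of f_p (i.e., y = f_p(x)). Then the set H_S = { r ∈ p^TP : f_r(x) = y for all (x,y) ∈ S } is a face of p^TP: for every r ∈ H_S and every decomposition r = λ r1 + (1−λ) r2 with r1, r2 ∈ p^TP and λ ∈ (0,1), both r1 and r2 belong to H_S. -/
/-- The set of thermal processes. -/
def TP (d : ℕ) (s : Fin d → ℝ) : Set (Matrix (Fin d) (Fin d) ℝ) :=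
  {T | (∀ i j, 0 ≤ T i j) ∧ (∀ j, ∑ i, T i j = 1) ∧
    T.mulVec (fun i => s i / ∑ k, s k) = (fun i => s i / ∑ k, s k)}

/-- A probability vector. -/
def ProbVec (d : ℕ) (p : Fin d → ℝ) : Prop := (∀ i, 0 ≤ p i) ∧ ∑ i, p i = 1

/-- `p^TP`, the set of states achievable from `p` by thermal processes. -/
def achievable (d : ℕ) (s p : Fin d → ℝ) : Set (Fin d → ℝ) :=
  (fun T : Matrix (Fin d) (Fin d) ℝ => T.mulVec p) '' TP d s

/-- The thermomajorization curve of `p`. -/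
noncomputable def curve (d : ℕ) (s p : Fin d → ℝ) (x : ℝ) : ℝ :=
  sSup {y | ∃ lam : Fin d → ℝ, (∀ i, lam i ∈ Set.Icc (0 : ℝ) 1) ∧
    (∑ i, lam i * s i = x) ∧ y = ∑ i, lam i * p i}

/-- The set whose sup defines the curve. -/
def curveSet (d : ℕ) (s p : Fin d → ℝ) (x : ℝ) : Set ℝ :=
  {y | ∃ lam : Fin d → ℝ, (∀ i, lam i ∈ Set.Icc (0 : ℝ) 1) ∧
    (∑ i, lam i * s i = x) ∧ y = ∑ i, lam i * p i}

lemma curve_eq (d : ℕ) (s p : Fin d → ℝ) (x : ℝ) :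
    curve d s p x = sSup (curveSet d s p x) := rfl

lemma curveSet_nonempty (d : ℕ) (s p : Fin d → ℝ) (hZ : 0 < ∑ k, s k)
    (x : ℝ) (hx0 : 0 ≤ x) (hxZ : x ≤ ∑ k, s k) :
    (curveSet d s p x).Nonempty := by
  refine ⟨∑ i, (x / ∑ k, s k) * p i, fun _ => x / ∑ k, s k, ?_, ?_, rfl⟩
  · intro i
    exact ⟨div_nonneg hx0 hZ.le, (div_le_one hZ).2 hxZ⟩
  · rw [← Finset.mul_sum]
    exact div_mul_cancel₀ x hZ.ne'

lemma curveSet_bddAbove (d : ℕ) (s p : Fin d → ℝ) (hp : ∀ i, 0 ≤ p i) (x : ℝ) :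
    BddAbove (curveSet d s p x) := by
  refine ⟨∑ i, p i, ?_⟩
  rintro y ⟨lam, hlam, -, rfl⟩
  exact Finset.sum_le_sum fun i _ => mul_le_of_le_one_left (hp i) (hlam i).2

/-- Monotonicity of the thermomajorization curve under thermal processes. -/
lemma curve_mulVec_le (d : ℕ) (s : Fin d → ℝ)
    (p : Fin d → ℝ) (hp : ∀ i, 0 ≤ p i)
    (T : Matrix (Fin d) (Fin d) ℝ) (hT : T ∈ TP d s)
    (x : ℝ) (hZ : 0 < ∑ k, s k) (hx0 : 0 ≤ x) (hxZ : x ≤ ∑ k, s k) :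
    curve d s (T.mulVec p) x ≤ curve d s p x := by
  obtain ⟨hT0, hTcol, hTg⟩ := hT
  have hTs : ∀ i, ∑ j, T i j * s j = s i := by
    intro i
    have := congrFun hTg i
    simp only [Matrix.mulVec, dotProduct] at this
    have h2 : (∑ j, T i j * (s j / ∑ k, s k)) * (∑ k, s k) = (s i / ∑ k, s k) * (∑ k, s k) := by
      rw [this]
    rw [Finset.sum_mul, div_mul_cancel₀ _ hZ.ne'] at h2
    calc ∑ j, T i j * s j = ∑ j, T i j * (s j / ∑ k, s k) * (∑ k, s k) := by
          apply Finset.sum_congr rfl; intro j _; field_simp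
      _ = s i := h2
  rw [curve_eq, curve_eq]
  apply csSup_le (curveSet_nonempty d s _ hZ x hx0 hxZ)
  rintro y ⟨lam, hlam, hsum, rfl⟩
  apply le_csSup (curveSet_bddAbove d s p hp x)
  refine ⟨fun j => ∑ i, lam i * T i j, fun j => ⟨?_, ?_⟩, ?_, ?_⟩
  · exact Finset.sum_nonneg fun i _ => mul_nonneg (hlam i).1 (hT0 i j)
  · calc ∑ i, lam i * T i j ≤ ∑ i, T i j :=
          Finset.sum_le_sum fun i _ => mul_le_of_le_one_left (hT0 i j) (hlam i).2
      _ = 1 := hTcol j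
  · calc ∑ j, (∑ i, lam i * T i j) * s j = ∑ i, lam i * ∑ j, T i j * s j := by
          simp_rw [Finset.sum_mul, Finset.mul_sum, mul_assoc]
          exact Finset.sum_comm
      _ = ∑ i, lam i * s i := by
          apply Finset.sum_congr rfl; intro i _; rw [hTs i]
      _ = x := hsum
  · calc ∑ i, lam i * T.mulVec p i = ∑ i, lam i * ∑ j, T i j * p j := rfl
      _ = ∑ j, (∑ i, lam i * T i j) * p j := by
          simp_rw [Finset.sum_mul, Finset.mul_sum, mul_assoc]
          exact Finset.sum_comm
      _ = _ := by
          apply Finset.sum_congr rfl; intro j _; rw [Finset.sum_mul]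

/-- Convexity of the curve in the state. -/
lemma curve_combo_le (d : ℕ) (s a b : Fin d → ℝ) (ha : ∀ i, 0 ≤ a i) (hb : ∀ i, 0 ≤ b i)
    (lam : ℝ) (hl0 : 0 ≤ lam) (hl1 : lam ≤ 1)
    (x : ℝ) (hZ : 0 < ∑ k, s k) (hx0 : 0 ≤ x) (hxZ : x ≤ ∑ k, s k) :
    curve d s (lam • a + (1 - lam) • b) x ≤ lam * curve d s a x + (1 - lam) * curve d s b x := by
  rw [curve_eq, curve_eq, curve_eq]
  apply csSup_le (curveSet_nonempty d s _ hZ x hx0 hxZ)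
  rintro y ⟨mu, hmu, hsum, rfl⟩
  have ha' : ∑ i, mu i * a i ≤ sSup (curveSet d s a x) :=
    le_csSup (curveSet_bddAbove d s a ha x) ⟨mu, hmu, hsum, rfl⟩
  have hb' : ∑ i, mu i * b i ≤ sSup (curveSet d s b x) :=
    le_csSup (curveSet_bddAbove d s b hb x) ⟨mu, hmu, hsum, rfl⟩
  have key : ∑ i, mu i * (lam • a + (1 - lam) • b) i
      = lam * ∑ i, mu i * a i + (1 - lam) * ∑ i, mu i * b i := by
    rw [Finset.mul_sum, Finset.mul_sum, ← Finset.sum_add_distrib]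
    apply Finset.sum_congr rfl; intro i _
    simp only [Pi.add_apply, Pi.smul_apply, smul_eq_mul]; ring
  rw [key]
  have h1 : 1 - lam ≥ 0 := by linarith
  nlinarith [ha', hb']

lemma achievable_prob (d : ℕ) (s p : Fin d → ℝ) (hp : ProbVec d p)
    (r : Fin d → ℝ) (hr : r ∈ achievable d s p) : ∀ i, 0 ≤ r i := by
  obtain ⟨T, ⟨hT0, hTcol, _⟩, rfl⟩ := hr
  intro i
  simp only [Matrix.mulVec, dotProduct]
  exact Finset.sum_nonneg fun j _ => mul_nonneg (hT0 i j) (hp.1 j)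

/-- for a nonempty finite set `S` of points `(x,y)` with `0 < x < Z`
lying on the graph of `f_p`, the set `H_S = {r ∈ p^TP : f_r(x) = y for all (x,y) ∈ S}`
is a face of `p^TP`: whenever `r ∈ H_S` is a proper convex combination of
`r1, r2 ∈ p^TP`, both `r1` and `r2` belong to `H_S`. -/
theorem stmt13 (d : ℕ) (hd : 1 ≤ d) (s : Fin d → ℝ) (hs : ∀ i, 0 < s i)
    (p : Fin d → ℝ) (hp : ProbVec d p)
    (S : Finset (ℝ × ℝ)) (hS : S.Nonempty)
    (hSon : ∀ q ∈ S, 0 < q.1 ∧ q.1 < ∑ i, s i ∧ curve d s p q.1 = q.2) :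
    ∀ r ∈ achievable d s p, (∀ q ∈ S, curve d s r q.1 = q.2) →
      ∀ r1 ∈ achievable d s p, ∀ r2 ∈ achievable d s p, ∀ lam ∈ Set.Ioo (0 : ℝ) 1,
        r = lam • r1 + (1 - lam) • r2 →
          (∀ q ∈ S, curve d s r1 q.1 = q.2) ∧ (∀ q ∈ S, curve d s r2 q.1 = q.2) := by
  intro r hr hrS r1 hr1 r2 hr2 lam hlam hdecomp
  haveI : Nonempty (Fin d) := ⟨⟨0, hd⟩⟩
  have hZ : 0 < ∑ k, s k :=
    Finset.sum_pos (fun i _ => hs i) Finset.univ_nonempty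
  have hr1p := achievable_prob d s p hp r1 hr1
  have hr2p := achievable_prob d s p hp r2 hr2
  have key : ∀ q ∈ S, curve d s r1 q.1 = q.2 ∧ curve d s r2 q.1 = q.2 := by
    intro q hq
    obtain ⟨hx0, hxZ, hcp⟩ := hSon q hq
    have hcr := hrS q hq
    obtain ⟨T1, hT1, rfl⟩ := hr1
    obtain ⟨T2, hT2, rfl⟩ := hr2
    have h1 : curve d s (T1.mulVec p) q.1 ≤ q.2 := by
      rw [← hcp]; exact curve_mulVec_le d s p hp.1 T1 hT1 q.1 hZ hx0.le hxZ.le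
    have h2 : curve d s (T2.mulVec p) q.1 ≤ q.2 := by
      rw [← hcp]; exact curve_mulVec_le d s p hp.1 T2 hT2 q.1 hZ hx0.le hxZ.le
    have h3 : q.2 ≤ lam * curve d s (T1.mulVec p) q.1
        + (1 - lam) * curve d s (T2.mulVec p) q.1 := by
      rw [← hcr, hdecomp]
      exact curve_combo_le d s _ _ hr1p hr2p lam hlam.1.le hlam.2.le q.1 hZ hx0.le hxZ.le
    constructor <;> nlinarith [hlam.1, hlam.2]
  exact ⟨fun q hq => (key q hq).1, fun q hq => (key q hq).2⟩
end

section
/- Let p and r be probability vectors such that p tightly thermomajorizes r. Then there exists a thermal process T ∈ TP(d,s) with T p = r such that T is an extreme point of TP(d,s) and T is a biplanar extremal thermal process with orders (π_in, π_out), where π_in is a β-order of p and π_out is a β-order of r. If moreover all slopes of f_p are different, then T is the unique thermal process satisfying T p = r. -/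
/-- The transportation polytope `T(r,c)`. -/
def TransportPolytope (m n : ℕ) (r : Fin m → ℝ) (c : Fin n → ℝ) :
    Set (Matrix (Fin m) (Fin n) ℝ) :=
  {M | (∀ i j, 0 ≤ M i j) ∧ (∀ i, ∑ j, M i j = r i) ∧ (∀ j, ∑ i, M i j = c j)}

/-- `π` is a β-order of `p`. -/
def IsBetaOrder (d : ℕ) (s p : Fin d → ℝ) (π : Equiv.Perm (Fin d)) : Prop :=
  ∀ i j : Fin d, i ≤ j → p (π j) / s (π j) ≤ p (π i) / s (π i)

/-- `p` tightly thermomajorizes `r`. -/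
def TightlyThermomajorizes (d : ℕ) (s p r : Fin d → ℝ) : Prop :=
  (∀ x ∈ Set.Icc (0 : ℝ) (∑ i, s i), curve d s r x ≤ curve d s p x) ∧
  ∃ π : Equiv.Perm (Fin d), IsBetaOrder d s r π ∧
    ∀ k : Fin d, (k : ℕ) + 1 < d →
      curve d s p (∑ i ∈ Finset.Iic k, s (π i)) = ∑ i ∈ Finset.Iic k, r (π i)

/-- `M` (an `m × n` matrix) is biplanar with orders `(π_in, π_out)`: no two distinct
nonzero entries of `M` cross with respect to `(π_in, π_out)`. -/
def BiplanarWithOrders (m n : ℕ) (M : Matrix (Fin m) (Fin n) ℝ)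
    (πin : Equiv.Perm (Fin n)) (πout : Equiv.Perm (Fin m)) : Prop :=
  ∀ i i' : Fin m, ∀ j j' : Fin n, (i, j) ≠ (i', j') → M i j ≠ 0 → M i' j' ≠ 0 →
    ¬ ((((πout.symm i : Fin m) : ℤ) - ((πout.symm i' : Fin m) : ℤ)) *
        (((πin.symm j : Fin n) : ℤ) - ((πin.symm j' : Fin n) : ℤ)) < 0)

/-- `T` is a biplanar extremal thermal process with orders `(π_in, π_out)`. -/
def IsBiplanarExtremalTP (d : ℕ) (s : Fin d → ℝ) (T : Matrix (Fin d) (Fin d) ℝ)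
    (πin πout : Equiv.Perm (Fin d)) : Prop :=
  T ∈ Set.extremePoints ℝ (TP d s) ∧
  T * Matrix.diagonal s ∈ Set.extremePoints ℝ (TransportPolytope d d s s) ∧
  BiplanarWithOrders d d (T * Matrix.diagonal s) πin πout



namespace Stmt15Aux

set_option maxHeartbeats 1000000 in
/-- interval overlap inclusion-exclusion identity -/
lemma incl_excl (u v c e : ℝ) (huv : u ≤ v) (hce : c ≤ e) :
    min v e - min u e - min v c + min u c = max 0 (min v e - max u c) := by
  rcases le_total u c with h1|h1 <;> rcases le_total v e with h2|h2 <;>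
    rcases le_total u e with h3|h3 <;> rcases le_total v c with h4|h4 <;>
    rcases le_total (min v e) (max u c) with h5|h5 <;>
    simp only [min_def, max_def] at * <;> split_ifs at * <;> linarith

set_option maxHeartbeats 1000000 in
/-- splitting an overlap as difference of prefix overlaps -/
lemma ov_split (u v c e : ℝ) (huv : u ≤ v) (hce : c ≤ e) :
    max 0 (min v e - max u c) = max 0 (min v e - c) - max 0 (min u e - c) := by
  rcases le_total u c with h1|h1 <;> rcases le_total v e with h2|h2 <;>
    rcases le_total u e with h3|h3 <;> rcases le_total v c with h4|h4 <;>
    rcases le_total (min v e) (max u c) with h5|h5 <;>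
    simp only [min_def, max_def] at * <;> split_ifs at * <;> linarith


variable {d : ℕ} (s : Fin d → ℝ) (σ : Equiv.Perm (Fin d))

/-- `v` read along the order `σ`, extended by `0` to all of `ℕ`. -/
noncomputable def nv (v : Fin d → ℝ) (σ : Equiv.Perm (Fin d)) (n : ℕ) : ℝ :=
  if h : n < d then v (σ ⟨n, h⟩) else 0

/-- cumulative sums of `s` along `σ`. -/
noncomputable def C (n : ℕ) : ℝ := ∑ i ∈ Finset.range n, nv s σ i

lemma nv_apply (v : Fin d → ℝ) (b : Fin d) : nv v σ (b : ℕ) = v (σ b) := by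
  simp [nv, b.isLt]

lemma nv_of_ge (v : Fin d → ℝ) {n : ℕ} (h : d ≤ n) : nv v σ n = 0 := by
  simp [nv, Nat.not_lt.2 h]

lemma C_zero : C s σ 0 = 0 := by simp [C]

lemma C_succ (n : ℕ) : C s σ (n + 1) = C s σ n + nv s σ n := by
  simp [C, Finset.sum_range_succ]

lemma nv_nonneg (hs : ∀ i, 0 < s i) (n : ℕ) : 0 ≤ nv s σ n := by
  unfold nv; split_ifs with h
  · exact (hs _).le
  · exact le_refl 0

lemma C_nonneg (hs : ∀ i, 0 < s i) (n : ℕ) : 0 ≤ C s σ n :=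
  Finset.sum_nonneg fun i _ => nv_nonneg s σ hs i

lemma C_mono (hs : ∀ i, 0 < s i) : Monotone (C s σ) := by
  intro a b hab
  exact Finset.sum_le_sum_of_subset_of_nonneg (Finset.range_subset_range.2 hab)
    (fun i _ _ => nv_nonneg s σ hs i)

lemma sum_fin_eq_sum_range (f : Fin d → ℝ) :
    ∑ i : Fin d, f i = ∑ n ∈ Finset.range d, nv f σ n := by
  rw [← Equiv.sum_comp σ f, ← Fin.sum_univ_eq_sum_range (nv f σ) d]
  apply Finset.sum_congr rfl
  intro i _
  simp [nv, i.isLt]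

lemma C_d : C s σ d = ∑ i, s i := (sum_fin_eq_sum_range σ s).symm

lemma C_top {n : ℕ} (hn : d ≤ n) : C s σ n = ∑ i, s i := by
  rw [← C_d s σ]
  unfold C
  refine (Finset.sum_subset (Finset.range_subset_range.2 hn) ?_).symm
  intro x _ hx
  exact nv_of_ge σ s (Nat.le_of_not_lt (by simpa using hx))

lemma C_le (hs : ∀ i, 0 < s i) (n : ℕ) : C s σ n ≤ ∑ i, s i := by
  rcases le_total n d with h | h
  · rw [← C_d s σ]; exact C_mono s σ hs h
  · rw [C_top s σ h]

set_option maxHeartbeats 1000000 in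
lemma step_lemma (u v a b : ℝ) (hu : 0 ≤ u) (huv : u ≤ v) (hab : a ≤ b) :
    max 0 (min v a - u) + max 0 (min v b - max u a) = max 0 (min v b - u) := by
  rcases le_total u a with h1|h1 <;> rcases le_total v a with h2|h2 <;>
    rcases le_total v b with h3|h3 <;>
    simp only [min_def, max_def] at * <;> split_ifs at * <;> linarith

lemma abel_id (Δ ρ : ℕ → ℝ) (m : ℕ) :
    ∑ n ∈ Finset.range m, (Δ (n+1) - Δ n) * ρ n
      = Δ m * ρ m - Δ 0 * ρ 0 + ∑ n ∈ Finset.range m, Δ (n+1) * (ρ n - ρ (n+1)) := by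
  induction m with
  | zero => simp
  | succ m ih =>
    rw [Finset.sum_range_succ, ih, Finset.sum_range_succ]
    ring




section Curve

variable {d : ℕ} (s : Fin d → ℝ) (σ : Equiv.Perm (Fin d))

lemma Lcum (hs : ∀ i, 0 < s i) {u v : ℝ} (hu : 0 ≤ u) (huv : u ≤ v) (n : ℕ) :
    ∑ b ∈ Finset.range n, max 0 (min v (C s σ (b+1)) - max u (C s σ b))
      = max 0 (min v (C s σ n) - u) := by
  induction n with
  | zero =>
    rw [Finset.sum_range_zero, C_zero, eq_comm, max_eq_left]
    have := min_le_right v (0:ℝ)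
    linarith
  | succ n ih =>
    rw [Finset.sum_range_succ, ih,
      step_lemma u v (C s σ n) (C s σ (n+1)) hu huv (C_mono s σ hs (Nat.le_succ n))]

/-- the overlap of `[0,x]` with the `b`-th interval of the partition induced by `σ`. -/
noncomputable def ovl (x : ℝ) (b : ℕ) : ℝ := max 0 (min x (C s σ (b+1)) - C s σ b)

/-- slope of the `b`-th segment. -/
noncomputable def rho (p : Fin d → ℝ) (b : ℕ) : ℝ := nv p σ b / nv s σ b

/-- greedy (maximal) value of the LP defining the curve. -/
noncomputable def gval (p : Fin d → ℝ) (x : ℝ) : ℝ :=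
  ∑ b ∈ Finset.range d, ovl s σ x b * rho s σ p b

lemma sum_ovl (hs : ∀ i, 0 < s i) {x : ℝ} (hx : 0 ≤ x) (n : ℕ) :
    ∑ b ∈ Finset.range n, ovl s σ x b = min x (C s σ n) := by
  have h1 : ∀ b ∈ Finset.range n, ovl s σ x b
      = max 0 (min x (C s σ (b+1)) - max 0 (C s σ b)) := by
    intro b _
    rw [ovl, max_eq_right (C_nonneg s σ hs b)]
  rw [Finset.sum_congr rfl h1, Lcum s σ hs le_rfl hx n, sub_zero, max_eq_right]
  exact le_min hx (C_nonneg s σ hs n)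

lemma ovl_single (hs : ∀ i, 0 < s i) {x : ℝ} (hx : 0 ≤ x) (b : ℕ) :
    ovl s σ x b = min x (C s σ (b+1)) - min x (C s σ b) := by
  have h1 := sum_ovl s σ hs hx (b+1)
  rw [Finset.sum_range_succ, sum_ovl s σ hs hx b] at h1
  linarith

lemma ovl_nonneg (x : ℝ) (b : ℕ) : 0 ≤ ovl s σ x b := le_max_left _ _

lemma ovl_le_nv (hs : ∀ i, 0 < s i) (x : ℝ) (b : ℕ) : ovl s σ x b ≤ nv s σ b := by
  rw [ovl]
  have h1 : min x (C s σ (b+1)) - C s σ b ≤ nv s σ b := by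
    have := min_le_right x (C s σ (b+1))
    have := C_succ s σ b
    linarith
  exact max_le (nv_nonneg s σ hs b) h1

lemma rho_nonneg (p : Fin d → ℝ) (hp0 : ∀ i, 0 ≤ p i) (hs : ∀ i, 0 < s i) (n : ℕ) :
    0 ≤ rho s σ p n := by
  rw [rho]
  unfold nv
  split_ifs with h
  · exact div_nonneg (hp0 _) (hs _).le
  · simp

lemma rho_anti (p : Fin d → ℝ) (hβ : IsBetaOrder d s p σ) (hp0 : ∀ i, 0 ≤ p i)
    (hs : ∀ i, 0 < s i) (n : ℕ) : rho s σ p (n+1) ≤ rho s σ p n := by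
  by_cases h1 : n + 1 < d
  · have h0 : n < d := Nat.lt_of_succ_lt h1
    have := hβ ⟨n, h0⟩ ⟨n+1, h1⟩ (by simp)
    rw [rho, rho, nv, nv, nv, nv]
    rw [dif_pos h0, dif_pos h0, dif_pos h1, dif_pos h1]
    exact this
  · have h2 : rho s σ p (n+1) = 0 := by
      rw [rho, nv, nv, dif_neg h1, dif_neg h1]
      simp
    rw [h2]
    exact rho_nonneg s σ p hp0 hs n


/-- prefix sums of the transported weights. -/
noncomputable def Wl (lam : Fin d → ℝ) (n : ℕ) : ℝ :=
  ∑ b ∈ Finset.range n, nv (fun i => lam i * s i) σ b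

/-- slack of the prefix sums against the greedy prefix sums. -/
noncomputable def Dl (lam : Fin d → ℝ) (x : ℝ) (n : ℕ) : ℝ :=
  min x (C s σ n) - Wl s σ lam n

variable (p : Fin d → ℝ) (lam : Fin d → ℝ) (x : ℝ)

lemma Wl_zero : Wl s σ lam 0 = 0 := by simp [Wl]

lemma Wl_succ (n : ℕ) :
    Wl s σ lam (n+1) = Wl s σ lam n + nv (fun i => lam i * s i) σ n := by
  simp [Wl, Finset.sum_range_succ]

lemma Wl_le_C (hs : ∀ i, 0 < s i) (hlam1 : ∀ i, lam i ≤ 1) (n : ℕ) : Wl s σ lam n ≤ C s σ n := by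
  apply Finset.sum_le_sum
  intro b _
  rw [nv, nv]
  split_ifs with h
  · have := hs (σ ⟨b, h⟩)
    have := hlam1 (σ ⟨b, h⟩)
    nlinarith
  · exact le_refl 0

lemma Wl_mono (hs : ∀ i, 0 < s i) (hlam0 : ∀ i, 0 ≤ lam i) : Monotone (Wl s σ lam) := by
  intro a b hab
  apply Finset.sum_le_sum_of_subset_of_nonneg (Finset.range_subset_range.2 hab)
  intro i _ _
  rw [nv]
  split_ifs with h
  · exact mul_nonneg (hlam0 _) (hs _).le
  · exact le_refl 0

lemma Wl_d (hsum : ∑ i, lam i * s i = x) : Wl s σ lam d = x := by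
  rw [Wl, ← sum_fin_eq_sum_range σ (fun i => lam i * s i), hsum]

lemma Dl_nonneg (hs : ∀ i, 0 < s i) (hlam0 : ∀ i, 0 ≤ lam i) (hlam1 : ∀ i, lam i ≤ 1)
    (hsum : ∑ i, lam i * s i = x) {n : ℕ} (hn : n ≤ d) : 0 ≤ Dl s σ lam x n := by
  rw [Dl, sub_nonneg]
  apply le_min
  · rw [← Wl_d s σ lam x hsum]
    exact Wl_mono s σ lam hs hlam0 hn
  · exact Wl_le_C s σ lam hs hlam1 n

lemma Dl_zero (hx0 : 0 ≤ x) : Dl s σ lam x 0 = 0 := by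
  rw [Dl, Wl_zero, C_zero, min_eq_right hx0, sub_zero]

lemma Dl_d (hsum : ∑ i, lam i * s i = x) (hxZ : x ≤ ∑ i, s i) :
    Dl s σ lam x d = 0 := by
  rw [Dl, Wl_d s σ lam x hsum, C_d, min_eq_left hxZ, sub_self]

lemma gval_sub_eq (hs : ∀ i, 0 < s i) (hx0 : 0 ≤ x) :
    gval s σ p x - ∑ i, lam i * p i
      = Dl s σ lam x d * rho s σ p d - Dl s σ lam x 0 * rho s σ p 0
        + ∑ n ∈ Finset.range d, Dl s σ lam x (n+1) * (rho s σ p n - rho s σ p (n+1)) := by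
  have hterm : ∀ b ∈ Finset.range d, ovl s σ x b * rho s σ p b
      - nv (fun i => lam i * p i) σ b
      = (Dl s σ lam x (b+1) - Dl s σ lam x b) * rho s σ p b := by
    intro b _
    have h1 : ovl s σ x b = min x (C s σ (b+1)) - min x (C s σ b) :=
      ovl_single s σ hs hx0 b
    have h2 : Dl s σ lam x (b+1) - Dl s σ lam x b
        = ovl s σ x b - nv (fun i => lam i * s i) σ b := by
      rw [Dl, Dl, Wl_succ, h1]; ring
    have h3 : nv (fun i => lam i * p i) σ b
        = nv (fun i => lam i * s i) σ b * rho s σ p b := by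
      rw [rho]
      unfold nv
      split_ifs with h
      · have hne := ne_of_gt (hs (σ ⟨b, h⟩))
        field_simp
      · simp
    rw [h2, h3]; ring
  have hsp : ∑ i, lam i * p i = ∑ b ∈ Finset.range d, nv (fun i => lam i * p i) σ b :=
    sum_fin_eq_sum_range σ _
  rw [gval, hsp, ← Finset.sum_sub_distrib, Finset.sum_congr rfl hterm,
    abel_id (Dl s σ lam x) (rho s σ p) d]

lemma sum_le_gval (hs : ∀ i, 0 < s i) (hβ : IsBetaOrder d s p σ) (hp0 : ∀ i, 0 ≤ p i)
    (hx0 : 0 ≤ x) (hxZ : x ≤ ∑ i, s i)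
    (hlam : ∀ i, lam i ∈ Set.Icc (0:ℝ) 1) (hsum : ∑ i, lam i * s i = x) :
    ∑ i, lam i * p i ≤ gval s σ p x := by
  have hlam0 : ∀ i, 0 ≤ lam i := fun i => (hlam i).1
  have hlam1 : ∀ i, lam i ≤ 1 := fun i => (hlam i).2
  have h := gval_sub_eq s σ p lam x hs hx0
  rw [Dl_d s σ lam x hsum hxZ, Dl_zero s σ lam x hx0, zero_mul, zero_mul,
    sub_zero, zero_add] at h
  have hsum0 : 0 ≤ ∑ n ∈ Finset.range d,
      Dl s σ lam x (n+1) * (rho s σ p n - rho s σ p (n+1)) := by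
    apply Finset.sum_nonneg
    intro n hn
    apply mul_nonneg
    · exact Dl_nonneg s σ lam x hs hlam0 hlam1 hsum (Nat.succ_le_of_lt (Finset.mem_range.1 hn))
    · have := rho_anti s σ p hβ hp0 hs n
      linarith
  linarith

/-- the greedy maximizer. -/
noncomputable def lamG : Fin d → ℝ := fun i => ovl s σ x ((σ.symm i : ℕ)) / s i

lemma lamG_mem (hs : ∀ i, 0 < s i) : ∀ i, lamG s σ x i ∈ Set.Icc (0:ℝ) 1 := by
  intro i
  constructor
  · exact div_nonneg (ovl_nonneg s σ x _) (hs i).le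
  · rw [lamG, div_le_one (hs i)]
    have h := ovl_le_nv s σ hs x ((σ.symm i : ℕ))
    rwa [nv_apply, Equiv.apply_symm_apply] at h

lemma lamG_sum_s (hs : ∀ i, 0 < s i) (hx0 : 0 ≤ x) (hxZ : x ≤ ∑ i, s i) :
    ∑ i, lamG s σ x i * s i = x := by
  have h1 : ∀ i : Fin d, lamG s σ x i * s i = ovl s σ x ((σ.symm i : ℕ)) :=
    fun i => div_mul_cancel₀ _ (ne_of_gt (hs i))
  rw [Finset.sum_congr rfl (fun i _ => h1 i),
    Equiv.sum_comp σ.symm (fun b : Fin d => ovl s σ x (b : ℕ)),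
    Fin.sum_univ_eq_sum_range (ovl s σ x) d, sum_ovl s σ hs hx0 d,
    C_d, min_eq_left hxZ]

lemma lamG_sum_p (hs : ∀ i, 0 < s i) : ∑ i, lamG s σ x i * p i = gval s σ p x := by
  rw [← Equiv.sum_comp σ (fun i => lamG s σ x i * p i)]
  have h1 : ∀ b : Fin d, lamG s σ x (σ b) * p (σ b)
      = ovl s σ x (b : ℕ) * rho s σ p (b : ℕ) := by
    intro b
    rw [lamG, Equiv.symm_apply_apply, rho, nv_apply, nv_apply]
    ring
  rw [Finset.sum_congr rfl (fun b _ => h1 b),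
    Fin.sum_univ_eq_sum_range (fun n => ovl s σ x n * rho s σ p n) d, gval]

lemma gval_mem (hs : ∀ i, 0 < s i) (hx0 : 0 ≤ x) (hxZ : x ≤ ∑ i, s i) :
    gval s σ p x ∈ {y | ∃ lam : Fin d → ℝ, (∀ i, lam i ∈ Set.Icc (0 : ℝ) 1) ∧
      (∑ i, lam i * s i = x) ∧ y = ∑ i, lam i * p i} :=
  ⟨lamG s σ x, lamG_mem s σ x hs, lamG_sum_s s σ x hs hx0 hxZ,
    (lamG_sum_p s σ p x hs).symm⟩

lemma curve_eq_gval (hs : ∀ i, 0 < s i) (hβ : IsBetaOrder d s p σ) (hp0 : ∀ i, 0 ≤ p i)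
    (hx0 : 0 ≤ x) (hxZ : x ≤ ∑ i, s i) :
    curve d s p x = gval s σ p x := by
  have hub : ∀ y ∈ {y | ∃ lam : Fin d → ℝ, (∀ i, lam i ∈ Set.Icc (0 : ℝ) 1) ∧
      (∑ i, lam i * s i = x) ∧ y = ∑ i, lam i * p i}, y ≤ gval s σ p x := by
    rintro y ⟨lam, h1, h2, rfl⟩
    exact sum_le_gval s σ p lam x hs hβ hp0 hx0 hxZ h1 h2
  exact le_antisymm (csSup_le ⟨_, gval_mem s σ p x hs hx0 hxZ⟩ hub)
    (le_csSup ⟨_, hub⟩ (gval_mem s σ p x hs hx0 hxZ))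


lemma Dl_eq_zero_of_eq (hs : ∀ i, 0 < s i) (hβ : IsBetaOrder d s p σ)
    (hp0 : ∀ i, 0 ≤ p i)
    (hdist : ∀ i j : Fin d, i ≠ j → p i / s i ≠ p j / s j)
    (hx0 : 0 ≤ x) (hxZ : x ≤ ∑ i, s i)
    (hlam : ∀ i, lam i ∈ Set.Icc (0:ℝ) 1) (hsum : ∑ i, lam i * s i = x)
    (hval : ∑ i, lam i * p i = gval s σ p x) :
    ∀ n, n ≤ d → Dl s σ lam x n = 0 := by
  have hlam0 : ∀ i, 0 ≤ lam i := fun i => (hlam i).1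
  have hlam1 : ∀ i, lam i ≤ 1 := fun i => (hlam i).2
  have h := gval_sub_eq s σ p lam x hs hx0
  rw [Dl_d s σ lam x hsum hxZ, Dl_zero s σ lam x hx0, zero_mul, zero_mul,
    sub_zero, zero_add, hval, sub_self] at h
  have hterm : ∀ n ∈ Finset.range d,
      Dl s σ lam x (n+1) * (rho s σ p n - rho s σ p (n+1)) = 0 := by
    rw [eq_comm] at h
    refine (Finset.sum_eq_zero_iff_of_nonneg ?_).1 h
    intro n hn
    apply mul_nonneg
    · exact Dl_nonneg s σ lam x hs hlam0 hlam1 hsum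
        (Nat.succ_le_of_lt (Finset.mem_range.1 hn))
    · have := rho_anti s σ p hβ hp0 hs n
      linarith
  intro n hn
  rcases Nat.eq_zero_or_pos n with h0 | h0
  · rw [h0]; exact Dl_zero s σ lam x hx0
  rcases eq_or_lt_of_le hn with hnd | hnd
  · rw [hnd]; exact Dl_d s σ lam x hsum hxZ
  · obtain ⟨m, rfl⟩ : ∃ m, n = m + 1 := ⟨n - 1, (Nat.succ_pred_eq_of_pos h0).symm⟩
    have hm1 : m + 1 < d := hnd
    have hm0 : m < d := Nat.lt_of_succ_lt hm1
    have hne : σ ⟨m, hm0⟩ ≠ σ ⟨m+1, hm1⟩ := by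
      intro hc
      have := σ.injective hc
      simp at this
    have hrho : rho s σ p m ≠ rho s σ p (m+1) := by
      rw [rho, rho, nv, nv, nv, nv, dif_pos hm0, dif_pos hm0, dif_pos hm1,
        dif_pos hm1]
      exact hdist _ _ hne
    have hgt : 0 < rho s σ p m - rho s σ p (m+1) := by
      have := rho_anti s σ p hβ hp0 hs m
      rcases lt_or_eq_of_le this with h1 | h1
      · linarith
      · exact absurd h1.symm hrho
    have := hterm m (Finset.mem_range.2 hm0)
    rcases mul_eq_zero.1 this with h1 | h1
    · exact h1
    · linarith

lemma lam_eq_ovl_of_eq (hs : ∀ i, 0 < s i) (hβ : IsBetaOrder d s p σ)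
    (hp0 : ∀ i, 0 ≤ p i)
    (hdist : ∀ i j : Fin d, i ≠ j → p i / s i ≠ p j / s j)
    (hx0 : 0 ≤ x) (hxZ : x ≤ ∑ i, s i)
    (hlam : ∀ i, lam i ∈ Set.Icc (0:ℝ) 1) (hsum : ∑ i, lam i * s i = x)
    (hval : ∑ i, lam i * p i = gval s σ p x) :
    ∀ b : Fin d, lam (σ b) * s (σ b) = ovl s σ x (b : ℕ) := by
  intro b
  have hD := Dl_eq_zero_of_eq s σ p lam x hs hβ hp0 hdist hx0 hxZ hlam hsum hval
  have h1 : Dl s σ lam x ((b:ℕ)+1) = 0 := hD _ (Nat.succ_le_of_lt b.isLt)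
  have h2 : Dl s σ lam x (b:ℕ) = 0 := hD _ (le_of_lt b.isLt)
  rw [Dl] at h1 h2
  have h3 : nv (fun i => lam i * s i) σ (b:ℕ) = lam (σ b) * s (σ b) :=
    nv_apply σ _ b
  have h4 := Wl_succ s σ lam (b:ℕ)
  have h5 := ovl_single s σ hs hx0 (b:ℕ)
  rw [← h3, h5]
  linarith

lemma sum_Iic_eq (g : Fin d → ℝ) (k : Fin d) :
    ∑ i ∈ Finset.Iic k, g (σ i) = ∑ n ∈ Finset.range ((k:ℕ)+1), nv g σ n := by
  have hk1 : (k:ℕ) + 1 ≤ d := k.isLt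
  have e1 : ∑ n ∈ Finset.range ((k:ℕ)+1), nv g σ n
      = ∑ n ∈ Finset.range d, (if n ≤ (k:ℕ) then nv g σ n else 0) := by
    rw [eq_comm]
    rw [← Finset.sum_subset (Finset.range_subset_range.2 hk1)]
    · apply Finset.sum_congr rfl
      intro n hn
      rw [if_pos (Nat.lt_succ_iff.1 (Finset.mem_range.1 hn))]
    · intro n _ hn
      rw [if_neg (fun hc => hn (Finset.mem_range.2 (Nat.lt_succ_of_le hc)))]
  rw [e1, ← Fin.sum_univ_eq_sum_range (fun n => if n ≤ (k:ℕ) then nv g σ n else 0) d]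
  have e2 : ∀ i : Fin d, (if (i:ℕ) ≤ (k:ℕ) then nv g σ (i:ℕ) else 0)
      = (if i ≤ k then g (σ i) else 0) := by
    intro i
    rw [nv_apply]
    congr 1
  rw [Finset.sum_congr rfl (fun i _ => e2 i), ← Finset.sum_filter]
  congr 1
  ext i
  simp


lemma gval_zero (hs : ∀ i, 0 < s i) : gval s σ p 0 = 0 := by
  rw [gval]
  apply Finset.sum_eq_zero
  intro b _
  have h1 : min (0:ℝ) (C s σ (b+1)) = 0 := min_eq_left (C_nonneg s σ hs (b+1))
  rw [ovl, h1, max_eq_left (by linarith [C_nonneg s σ hs b]), zero_mul]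

lemma nv_mul_rho (hs : ∀ i, 0 < s i) (b : ℕ) :
    nv s σ b * rho s σ p b = nv p σ b := by
  rw [rho]
  unfold nv
  split_ifs with h
  · have hne := ne_of_gt (hs (σ ⟨b, h⟩))
    field_simp
  · simp

lemma gval_top (hs : ∀ i, 0 < s i) (hp1 : ∑ i, p i = 1) :
    gval s σ p (∑ i, s i) = 1 := by
  rw [gval]
  have h1 : ∀ b ∈ Finset.range d, ovl s σ (∑ i, s i) b * rho s σ p b
      = nv p σ b := by
    intro b _
    have hb : C s σ (b+1) - C s σ b = nv s σ b := by rw [C_succ]; ring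
    rw [ovl, min_eq_right (C_le s σ hs (b+1)), hb,
      max_eq_right (nv_nonneg s σ hs b), nv_mul_rho s σ p hs b]
  rw [Finset.sum_congr rfl h1, ← sum_fin_eq_sum_range σ p, hp1]

end Curve

section Mat

variable {d : ℕ} (s : Fin d → ℝ) (σout σin : Equiv.Perm (Fin d))

/-- overlap of output interval `a` and input interval `b`. -/
noncomputable def ovM (a b : ℕ) : ℝ :=
  max 0 (min (C s σout (a+1)) (C s σin (b+1)) - max (C s σout a) (C s σin b))

/-- the coupling matrix. -/
noncomputable def Mmat : Matrix (Fin d) (Fin d) ℝ :=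
  fun i j => ovM s σout σin ((σout.symm i : ℕ)) ((σin.symm j : ℕ))

/-- the thermal process. -/
noncomputable def Tmat : Matrix (Fin d) (Fin d) ℝ :=
  fun i j => Mmat s σout σin i j / s j

lemma ovM_nonneg (a b : ℕ) : 0 ≤ ovM s σout σin a b := le_max_left _ _

lemma ovM_comm (a b : ℕ) : ovM s σout σin a b = ovM s σin σout b a := by
  rw [ovM, ovM, min_comm (C s σout (a+1)) (C s σin (b+1)), max_comm (C s σout a) (C s σin b)]

lemma ovM_eq_diff (hs : ∀ i, 0 < s i) (a b : ℕ) :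
    ovM s σout σin a b
      = ovl s σin (C s σout (a+1)) b - ovl s σin (C s σout a) b := by
  rw [ovM, ovl, ovl]
  exact ov_split _ _ _ _ (C_mono s σout hs (Nat.le_succ a))
    (C_mono s σin hs (Nat.le_succ b))

lemma sum_ovM_row (hs : ∀ i, 0 < s i) (a : ℕ) :
    ∑ b ∈ Finset.range d, ovM s σout σin a b = nv s σout a := by
  have h0 : (0:ℝ) ≤ C s σout a := C_nonneg s σout hs a
  have h1 : C s σout a ≤ C s σout (a+1) := C_mono s σout hs (Nat.le_succ a)
  rw [show (∑ b ∈ Finset.range d, ovM s σout σin a b)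
      = ∑ b ∈ Finset.range d, max 0 (min (C s σout (a+1)) (C s σin (b+1))
        - max (C s σout a) (C s σin b)) from rfl,
    Lcum s σin hs h0 h1 d, C_d]
  have h2 : C s σout (a+1) ≤ ∑ i, s i := C_le s σout hs (a+1)
  rw [min_eq_left h2, max_eq_right (by linarith [C_succ s σout a, nv_nonneg s σout hs a]), C_succ]
  ring

lemma Mmat_mem : (∀ i, 0 < s i) →
    Mmat s σout σin ∈ TransportPolytope d d s s := by
  intro hs
  refine ⟨fun i j => ovM_nonneg s σout σin _ _, ?_, ?_⟩
  · intro i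
    rw [show (∑ j, Mmat s σout σin i j)
        = ∑ j : Fin d, ovM s σout σin ((σout.symm i : ℕ)) ((σin.symm j : ℕ)) from rfl,
      Equiv.sum_comp σin.symm
        (fun b : Fin d => ovM s σout σin ((σout.symm i : ℕ)) (b : ℕ)),
      Fin.sum_univ_eq_sum_range (fun n => ovM s σout σin ((σout.symm i : ℕ)) n) d,
      sum_ovM_row s σout σin hs, nv_apply, Equiv.apply_symm_apply]
  · intro j
    have h1 : ∀ i : Fin d, Mmat s σout σin i j
        = ovM s σin σout ((σin.symm j : ℕ)) ((σout.symm i : ℕ)) := by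
      intro i
      rw [Mmat, ovM_comm]
    rw [Finset.sum_congr rfl (fun i _ => h1 i),
      Equiv.sum_comp σout.symm
        (fun b : Fin d => ovM s σin σout ((σin.symm j : ℕ)) (b : ℕ)),
      Fin.sum_univ_eq_sum_range (fun n => ovM s σin σout ((σin.symm j : ℕ)) n) d,
      sum_ovM_row s σin σout hs, nv_apply, Equiv.apply_symm_apply]

lemma Tmat_mul_diag (hs : ∀ i, 0 < s i) :
    Tmat s σout σin * Matrix.diagonal s = Mmat s σout σin := by
  ext i j
  rw [Matrix.mul_diagonal, Tmat, div_mul_cancel₀ _ (ne_of_gt (hs j))]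

lemma Tmat_mem (hs : ∀ i, 0 < s i) : Tmat s σout σin ∈ TP d s := by
  obtain ⟨hM0, hMr, hMc⟩ := Mmat_mem s σout σin hs
  refine ⟨fun i j => div_nonneg (hM0 i j) (hs j).le, ?_, ?_⟩
  · intro j
    rw [show (∑ i, Tmat s σout σin i j) = ∑ i, Mmat s σout σin i j / s j from rfl,
      ← Finset.sum_div, hMc j, div_self (ne_of_gt (hs j))]
  · funext i
    rw [Matrix.mulVec, dotProduct]
    have h1 : ∀ j : Fin d, Tmat s σout σin i j * (s j / ∑ k, s k)
        = Mmat s σout σin i j / ∑ k, s k := by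
      intro j
      rw [Tmat]
      rw [div_mul_div_comm, mul_comm (s j), ← div_mul_div_comm,
        div_self (ne_of_gt (hs j)), mul_one]
    rw [Finset.sum_congr rfl (fun j _ => h1 j), ← Finset.sum_div, hMr i]


variable (p r : Fin d → ℝ)

lemma gval_at_elbows (hs : ∀ i, 0 < s i) (hβp : IsBetaOrder d s p σin)
    (hp0 : ∀ i, 0 ≤ p i) (hp1 : ∑ i, p i = 1) (hr1 : ∑ i, r i = 1)
    (helbow : ∀ k : Fin d, (k : ℕ) + 1 < d →
      curve d s p (∑ i ∈ Finset.Iic k, s (σout i)) = ∑ i ∈ Finset.Iic k, r (σout i)) :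
    ∀ n, n ≤ d → gval s σin p (C s σout n) = ∑ m ∈ Finset.range n, nv r σout m := by
  intro n hn
  rcases Nat.eq_zero_or_pos n with h0 | h0
  · rw [h0, C_zero, gval_zero s σin p hs, Finset.sum_range_zero]
  rcases eq_or_lt_of_le hn with hd' | hlt
  · rw [hd', C_d, gval_top s σin p hs hp1, ← sum_fin_eq_sum_range σout r, hr1]
  · obtain ⟨m, rfl⟩ : ∃ m, n = m + 1 := ⟨n - 1, (Nat.succ_pred_eq_of_pos h0).symm⟩
    have hmd : m < d := Nat.lt_of_succ_lt hlt
    have h := helbow ⟨m, hmd⟩ hlt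
    rw [sum_Iic_eq σout s ⟨m, hmd⟩, sum_Iic_eq σout r ⟨m, hmd⟩] at h
    have hC : (∑ n ∈ Finset.range ((⟨m, hmd⟩ : Fin d) : ℕ).succ, nv s σout n)
        = C s σout (m+1) := rfl
    rw [show (((⟨m, hmd⟩ : Fin d) : ℕ) + 1) = m + 1 from rfl] at h
    rw [show (∑ n ∈ Finset.range (m+1), nv s σout n) = C s σout (m+1) from rfl] at h
    rw [curve_eq_gval s σin p (C s σout (m+1)) hs hβp hp0
      (C_nonneg s σout hs (m+1)) (C_le s σout hs (m+1))] at h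
    exact h

lemma Tmat_mulVec (hs : ∀ i, 0 < s i) (hβp : IsBetaOrder d s p σin)
    (hp0 : ∀ i, 0 ≤ p i) (hp1 : ∑ i, p i = 1) (hr1 : ∑ i, r i = 1)
    (helbow : ∀ k : Fin d, (k : ℕ) + 1 < d →
      curve d s p (∑ i ∈ Finset.Iic k, s (σout i)) = ∑ i ∈ Finset.Iic k, r (σout i)) :
    (Tmat s σout σin).mulVec p = r := by
  have hRn := gval_at_elbows s σout σin p r hs hβp hp0 hp1 hr1 helbow
  funext i
  rw [Matrix.mulVec, dotProduct]
  have ha : ((σout.symm i : ℕ)) < d := (σout.symm i).isLt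
  have h1 : ∀ j : Fin d, Tmat s σout σin i j * p j
      = ovM s σout σin ((σout.symm i : ℕ)) ((σin.symm j : ℕ))
        * rho s σin p ((σin.symm j : ℕ)) := by
    intro j
    rw [Tmat, Mmat, rho, nv_apply, nv_apply, Equiv.apply_symm_apply]
    ring
  rw [Finset.sum_congr rfl (fun j _ => h1 j),
    Equiv.sum_comp σin.symm (fun b : Fin d =>
      ovM s σout σin ((σout.symm i : ℕ)) (b : ℕ) * rho s σin p (b : ℕ)),
    Fin.sum_univ_eq_sum_range (fun n =>
      ovM s σout σin ((σout.symm i : ℕ)) n * rho s σin p n) d]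
  have h2 : ∀ b ∈ Finset.range d,
      ovM s σout σin ((σout.symm i : ℕ)) b * rho s σin p b
        = ovl s σin (C s σout ((σout.symm i : ℕ)+1)) b * rho s σin p b
          - ovl s σin (C s σout ((σout.symm i : ℕ))) b * rho s σin p b := by
    intro b _
    rw [ovM_eq_diff s σout σin hs]
    ring
  rw [Finset.sum_congr rfl h2, Finset.sum_sub_distrib]
  rw [show (∑ b ∈ Finset.range d,
      ovl s σin (C s σout ((σout.symm i : ℕ)+1)) b * rho s σin p b)
      = gval s σin p (C s σout ((σout.symm i : ℕ)+1)) from rfl]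
  rw [show (∑ b ∈ Finset.range d,
      ovl s σin (C s σout ((σout.symm i : ℕ))) b * rho s σin p b)
      = gval s σin p (C s σout ((σout.symm i : ℕ))) from rfl]
  rw [hRn _ (Nat.succ_le_of_lt ha), hRn _ (le_of_lt ha), Finset.sum_range_succ]
  have h3 : nv r σout ((σout.symm i : ℕ)) = r i := by
    rw [nv_apply, Equiv.apply_symm_apply]
  rw [h3]
  ring


lemma ovM_ne_zero (a b : ℕ) (h : ovM s σout σin a b ≠ 0) :
    max (C s σout a) (C s σin b) < min (C s σout (a+1)) (C s σin (b+1)) := by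
  rw [ovM] at h
  by_contra hc
  push_neg at hc
  exact h (max_eq_left (by linarith))

lemma Mmat_biplanar (hs : ∀ i, 0 < s i) :
    BiplanarWithOrders d d (Mmat s σout σin) σin σout := by
  intro i i' j j' _ hne hne'
  intro hlt
  have h1 := ovM_ne_zero s σout σin _ _ hne
  have h2 := ovM_ne_zero s σout σin _ _ hne'
  set a := ((σout.symm i : Fin d) : ℕ) with hadef
  set a' := ((σout.symm i' : Fin d) : ℕ) with ha'def
  set b := ((σin.symm j : Fin d) : ℕ) with hbdef
  set b' := ((σin.symm j' : Fin d) : ℕ) with hb'def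
  have hSb : C s σin b < C s σout (a+1) :=
    lt_of_le_of_lt (le_max_right _ _) (lt_of_lt_of_le h1 (min_le_left _ _))
  have hSb' : C s σin b' < C s σout (a'+1) :=
    lt_of_le_of_lt (le_max_right _ _) (lt_of_lt_of_le h2 (min_le_left _ _))
  have hXa : C s σout a < C s σin (b+1) :=
    lt_of_le_of_lt (le_max_left _ _) (lt_of_lt_of_le h1 (min_le_right _ _))
  have hXa' : C s σout a' < C s σin (b'+1) :=
    lt_of_le_of_lt (le_max_left _ _) (lt_of_lt_of_le h2 (min_le_right _ _))
  rcases mul_neg_iff.1 hlt with ⟨hp1, hp2⟩ | ⟨hp1, hp2⟩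
  · have haa : a' < a := by exact_mod_cast sub_pos.1 hp1
    have hbb : b < b' := by exact_mod_cast sub_neg.1 hp2
    have c1 : C s σout (a'+1) ≤ C s σout a := C_mono s σout hs haa
    have c2 : C s σin (b+1) ≤ C s σin b' := C_mono s σin hs hbb
    linarith
  · have haa : a < a' := by exact_mod_cast sub_neg.1 hp1
    have hbb : b' < b := by exact_mod_cast sub_pos.1 hp2
    have c1 : C s σout (a+1) ≤ C s σout a' := C_mono s σout hs haa
    have c2 : C s σin (b'+1) ≤ C s σin b := C_mono s σin hs hbb
    linarith


end Mat

section Support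

variable {d : ℕ} (s : Fin d → ℝ) (σout σin : Equiv.Perm (Fin d))
variable (N : Matrix (Fin d) (Fin d) ℝ)

lemma sum_range_trunc (f : ℕ → ℝ) {n N : ℕ} (hn : n ≤ N)
    (hzero : ∀ m, n ≤ m → m < N → f m = 0) :
    ∑ m ∈ Finset.range N, f m = ∑ m ∈ Finset.range n, f m := by
  refine (Finset.sum_subset (Finset.range_subset_range.2 hn) ?_).symm
  intro x hx hnx
  exact hzero x (Nat.le_of_not_lt (fun hc => hnx (Finset.mem_range.2 hc)))
    (Finset.mem_range.1 hx)

/-- `N` in permuted coordinates, extended by zero. -/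
noncomputable def Np : ℕ → ℕ → ℝ :=
  fun a b => nv (fun i => nv (N i) σin b) σout a

lemma Np_eq {a b : ℕ} (ha : a < d) (hb : b < d) :
    Np σout σin N a b = N (σout ⟨a, ha⟩) (σin ⟨b, hb⟩) := by
  simp [Np, nv, ha, hb]

lemma Np_nonneg (hN0 : ∀ i j, 0 ≤ N i j) (a b : ℕ) : 0 ≤ Np σout σin N a b := by
  unfold Np nv
  split_ifs <;> first | exact hN0 _ _ | exact le_refl 0

lemma Np_rowsum (hNr : ∀ i, ∑ j, N i j = s i) (a : ℕ) :
    ∑ b ∈ Finset.range d, Np σout σin N a b = nv s σout a := by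
  by_cases ha : a < d
  · have h1 : ∀ b ∈ Finset.range d, Np σout σin N a b
        = nv (N (σout ⟨a, ha⟩)) σin b := by
      intro b _
      unfold Np nv
      rw [dif_pos ha]
    rw [Finset.sum_congr rfl h1, ← sum_fin_eq_sum_range σin (N (σout ⟨a, ha⟩)),
      hNr]
    unfold nv
    rw [dif_pos ha]
  · have h1 : ∀ b ∈ Finset.range d, Np σout σin N a b = 0 := by
      intro b _
      unfold Np nv
      rw [dif_neg ha]
    rw [Finset.sum_congr rfl h1, Finset.sum_const, smul_zero]
    unfold nv
    rw [dif_neg ha]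

lemma Np_colsum (hNc : ∀ j, ∑ i, N i j = s j) (b : ℕ) :
    ∑ a ∈ Finset.range d, Np σout σin N a b = nv s σin b := by
  by_cases hb : b < d
  · have h1 : ∀ a ∈ Finset.range d, Np σout σin N a b
        = nv (fun i => N i (σin ⟨b, hb⟩)) σout a := by
      intro a _
      by_cases ha : a < d <;> simp [Np, nv, ha, hb]
    rw [Finset.sum_congr rfl h1,
      ← sum_fin_eq_sum_range σout (fun i => N i (σin ⟨b, hb⟩)), hNc]
    unfold nv
    rw [dif_pos hb]
  · have h1 : ∀ a ∈ Finset.range d, Np σout σin N a b = 0 := by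
      intro a _
      by_cases ha : a < d <;> simp [Np, nv, ha, hb]
    rw [Finset.sum_congr rfl h1, Finset.sum_const, smul_zero]
    unfold nv
    rw [dif_neg hb]

/-- double prefix sums. -/
noncomputable def Fc (m n : ℕ) : ℝ :=
  ∑ a ∈ Finset.range m, ∑ b ∈ Finset.range n, Np σout σin N a b

lemma Np_supp (hsupp : ∀ i j, Mmat s σout σin i j = 0 → N i j = 0)
    {a b : ℕ} (ha : a < d) (hb : b < d) (hov : ovM s σout σin a b = 0) :
    Np σout σin N a b = 0 := by
  rw [Np_eq σout σin N ha hb]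
  apply hsupp
  have h1 : Mmat s σout σin (σout ⟨a, ha⟩) (σin ⟨b, hb⟩)
      = ovM s σout σin a b := by
    rw [Mmat, Equiv.symm_apply_apply, Equiv.symm_apply_apply]
  rw [h1, hov]

lemma Fc_eq (hs : ∀ i, 0 < s i) (hN0 : ∀ i j, 0 ≤ N i j)
    (hNr : ∀ i, ∑ j, N i j = s i) (hNc : ∀ j, ∑ i, N i j = s j)
    (hsupp : ∀ i j, Mmat s σout σin i j = 0 → N i j = 0)
    {m n : ℕ} (hm : m ≤ d) (hn : n ≤ d) :
    Fc σout σin N m n = min (C s σout m) (C s σin n) := by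
  rcases le_total (C s σout m) (C s σin n) with h | h
  · rw [min_eq_left h, Fc]
    have hrows : ∀ a ∈ Finset.range m,
        ∑ b ∈ Finset.range n, Np σout σin N a b
          = ∑ b ∈ Finset.range d, Np σout σin N a b := by
      intro a haM
      have ham : a < m := Finset.mem_range.1 haM
      refine (sum_range_trunc (fun b => Np σout σin N a b) hn ?_).symm
      intro b hnb hbd
      by_contra hNe
      have hov : ovM s σout σin a b ≠ 0 := by
        intro h0
        exact hNe (Np_supp s σout σin N hsupp (lt_of_lt_of_le ham hm) hbd h0)
      have h1 := ovM_ne_zero s σout σin a b hov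
      have hSb : C s σin b < C s σout (a+1) :=
        lt_of_le_of_lt (le_max_right _ _) (lt_of_lt_of_le h1 (min_le_left _ _))
      have c1 : C s σout (a+1) ≤ C s σout m := C_mono s σout hs ham
      have c2 : C s σin n ≤ C s σin b := C_mono s σin hs hnb
      linarith
    rw [Finset.sum_congr rfl hrows,
      Finset.sum_congr rfl (fun a _ => Np_rowsum s σout σin N hNr a)]
    rfl
  · rw [min_eq_right h, Fc, Finset.sum_comm]
    have hcols : ∀ b ∈ Finset.range n,
        ∑ a ∈ Finset.range m, Np σout σin N a b
          = ∑ a ∈ Finset.range d, Np σout σin N a b := by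
      intro b hbN
      have hbn : b < n := Finset.mem_range.1 hbN
      refine (sum_range_trunc (fun a => Np σout σin N a b) hm ?_).symm
      intro a hma had
      by_contra hNe
      have hov : ovM s σout σin a b ≠ 0 := by
        intro h0
        exact hNe (Np_supp s σout σin N hsupp had (lt_of_lt_of_le hbn hn) h0)
      have h1 := ovM_ne_zero s σout σin a b hov
      have hXa : C s σout a < C s σin (b+1) :=
        lt_of_le_of_lt (le_max_left _ _) (lt_of_lt_of_le h1 (min_le_right _ _))
      have c1 : C s σin (b+1) ≤ C s σin n := C_mono s σin hs hbn
      have c2 : C s σout m ≤ C s σout a := C_mono s σout hs hma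
      linarith
    rw [Finset.sum_congr rfl hcols,
      Finset.sum_congr rfl (fun b _ => Np_colsum s σout σin N hNc b)]
    rfl

lemma eq_Mmat_of_margins (hs : ∀ i, 0 < s i) (hN0 : ∀ i j, 0 ≤ N i j)
    (hNr : ∀ i, ∑ j, N i j = s i) (hNc : ∀ j, ∑ i, N i j = s j)
    (hsupp : ∀ i j, Mmat s σout σin i j = 0 → N i j = 0) :
    N = Mmat s σout σin := by
  have key : ∀ (a b : Fin d), Np σout σin N (a : ℕ) (b : ℕ)
      = ovM s σout σin (a : ℕ) (b : ℕ) := by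
    intro a b
    have e11 := Fc_eq s σout σin N hs hN0 hNr hNc hsupp
      (Nat.succ_le_of_lt a.isLt) (Nat.succ_le_of_lt b.isLt)
    have e01 := Fc_eq s σout σin N hs hN0 hNr hNc hsupp
      (le_of_lt a.isLt) (Nat.succ_le_of_lt b.isLt)
    have e10 := Fc_eq s σout σin N hs hN0 hNr hNc hsupp
      (Nat.succ_le_of_lt a.isLt) (le_of_lt b.isLt)
    have e00 := Fc_eq s σout σin N hs hN0 hNr hNc hsupp
      (le_of_lt a.isLt) (le_of_lt b.isLt)
    have r1 : Fc σout σin N ((a:ℕ)+1) ((b:ℕ)+1)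
        = Fc σout σin N (a:ℕ) ((b:ℕ)+1)
          + ∑ b' ∈ Finset.range ((b:ℕ)+1), Np σout σin N (a:ℕ) b' := by
      rw [Fc, Fc, Finset.sum_range_succ]
    have r2 : Fc σout σin N ((a:ℕ)+1) (b:ℕ)
        = Fc σout σin N (a:ℕ) (b:ℕ)
          + ∑ b' ∈ Finset.range (b:ℕ), Np σout σin N (a:ℕ) b' := by
      rw [Fc, Fc, Finset.sum_range_succ]
    have r3 : ∑ b' ∈ Finset.range ((b:ℕ)+1), Np σout σin N (a:ℕ) b'
        = ∑ b' ∈ Finset.range (b:ℕ), Np σout σin N (a:ℕ) b'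
          + Np σout σin N (a:ℕ) (b:ℕ) := Finset.sum_range_succ _ _
    have hie := incl_excl (C s σout (a:ℕ)) (C s σout ((a:ℕ)+1))
      (C s σin (b:ℕ)) (C s σin ((b:ℕ)+1))
      (C_mono s σout hs (Nat.le_succ _)) (C_mono s σin hs (Nat.le_succ _))
    rw [ovM]
    rw [e11, e01, e10, e00] at *
    linarith
  ext i j
  have h1 := key (σout.symm i) (σin.symm j)
  rw [Np_eq σout σin N (σout.symm i).isLt (σin.symm j).isLt] at h1
  simp only [Fin.eta, Equiv.apply_symm_apply] at h1
  rw [h1, Mmat]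


lemma Mmat_extreme (hs : ∀ i, 0 < s i) :
    Mmat s σout σin ∈ Set.extremePoints ℝ (TransportPolytope d d s s) := by
  refine ⟨Mmat_mem s σout σin hs, ?_⟩
  rintro A hA B hB hseg
  rw [openSegment] at hseg
  obtain ⟨ta, tb, hta, htb, htab, heq⟩ := hseg
  obtain ⟨hA0, hAr, hAc⟩ := hA
  obtain ⟨hB0, hBr, hBc⟩ := hB
  have hentry : ∀ i j, ta * A i j + tb * B i j = Mmat s σout σin i j := by
    intro i j
    have h := congrFun (congrFun heq i) j
    simpa [Matrix.add_apply, Matrix.smul_apply, smul_eq_mul] using h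
  have hsuppA : ∀ i j, Mmat s σout σin i j = 0 → A i j = 0 := by
    intro i j h0
    have h := hentry i j
    rw [h0] at h
    nlinarith [hA0 i j, hB0 i j]
  have hsuppB : ∀ i j, Mmat s σout σin i j = 0 → B i j = 0 := by
    intro i j h0
    have h := hentry i j
    rw [h0] at h
    nlinarith [hA0 i j, hB0 i j]
  exact eq_Mmat_of_margins s σout σin A hs hA0 hAr hAc hsuppA

lemma TP_rowsum (hd : 1 ≤ d) (hs : ∀ i, 0 < s i) {T : Matrix (Fin d) (Fin d) ℝ}
    (hT : T ∈ TP d s) (i : Fin d) : ∑ j, T i j * s j = s i := by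
  have hZ : 0 < ∑ k, s k :=
    Finset.sum_pos (fun k _ => hs k) ⟨⟨0, hd⟩, Finset.mem_univ _⟩
  have h := congrFun hT.2.2 i
  rw [Matrix.mulVec, dotProduct] at h
  have h1 : ∀ j : Fin d, T i j * (s j / ∑ k, s k) = (T i j * s j) / ∑ k, s k :=
    fun j => (mul_div_assoc _ _ _).symm
  rw [Finset.sum_congr rfl (fun j _ => h1 j), ← Finset.sum_div] at h
  field_simp at h
  exact h

lemma memTP_mul_diag (hd : 1 ≤ d) (hs : ∀ i, 0 < s i)
    {T : Matrix (Fin d) (Fin d) ℝ} (hT : T ∈ TP d s) :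
    T * Matrix.diagonal s ∈ TransportPolytope d d s s := by
  obtain ⟨hT0, hTc, hTg⟩ := hT
  refine ⟨?_, ?_, ?_⟩
  · intro i j
    rw [Matrix.mul_diagonal]
    exact mul_nonneg (hT0 i j) (hs j).le
  · intro i
    have h1 : ∀ j : Fin d, (T * Matrix.diagonal s) i j = T i j * s j :=
      fun j => Matrix.mul_diagonal _ _ _ _
    rw [Finset.sum_congr rfl (fun j _ => h1 j)]
    exact TP_rowsum s hd hs ⟨hT0, hTc, hTg⟩ i
  · intro j
    have h1 : ∀ i : Fin d, (T * Matrix.diagonal s) i j = T i j * s j :=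
      fun i => Matrix.mul_diagonal _ _ _ _
    rw [Finset.sum_congr rfl (fun i _ => h1 i), ← Finset.sum_mul, hTc j, one_mul]

lemma Tmat_extreme (hd : 1 ≤ d) (hs : ∀ i, 0 < s i) :
    Tmat s σout σin ∈ Set.extremePoints ℝ (TP d s) := by
  refine ⟨Tmat_mem s σout σin hs, ?_⟩
  rintro T1 h1 T2 h2 hseg
  rw [openSegment] at hseg
  obtain ⟨ta, tb, hta, htb, htab, heq⟩ := hseg
  have hMseg : ta • (T1 * Matrix.diagonal s) + tb • (T2 * Matrix.diagonal s)
      = Mmat s σout σin := by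
    rw [← Matrix.smul_mul, ← Matrix.smul_mul, ← Matrix.add_mul, heq,
      Tmat_mul_diag s σout σin hs]
  have hext := (Mmat_extreme s σout σin hs).2
    (memTP_mul_diag s hd hs h1) (memTP_mul_diag s hd hs h2)
    ⟨ta, tb, hta, htb, htab, hMseg⟩
  have hback : ∀ T' : Matrix (Fin d) (Fin d) ℝ,
      T' * Matrix.diagonal s = Mmat s σout σin → T' = Tmat s σout σin := by
    intro T' hT'
    ext i j
    have h := congrFun (congrFun hT' i) j
    rw [Matrix.mul_diagonal] at h
    rw [Tmat, ← h, mul_div_cancel_right₀ _ (ne_of_gt (hs j))]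
  exact hback T1 hext

end Support

section Unique

variable {d : ℕ} (s : Fin d → ℝ) (σout σin : Equiv.Perm (Fin d)) (p r : Fin d → ℝ)

lemma T_unique (hd : 1 ≤ d) (hs : ∀ i, 0 < s i)
    (hβp : IsBetaOrder d s p σin) (hp0 : ∀ i, 0 ≤ p i) (hp1 : ∑ i, p i = 1)
    (hr1 : ∑ i, r i = 1)
    (hdist : ∀ i j : Fin d, i ≠ j → p i / s i ≠ p j / s j)
    (helbow : ∀ k : Fin d, (k : ℕ) + 1 < d →
      curve d s p (∑ i ∈ Finset.Iic k, s (σout i)) = ∑ i ∈ Finset.Iic k, r (σout i))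
    (T' : Matrix (Fin d) (Fin d) ℝ) (hT' : T' ∈ TP d s)
    (hTp : T'.mulVec p = r) : T' = Tmat s σout σin := by
  have hRn := gval_at_elbows s σout σin p r hs hβp hp0 hp1 hr1 helbow
  have key : ∀ n, n ≤ d → ∀ b : Fin d,
      (∑ a : Fin d, if (a:ℕ) < n then T' (σout a) (σin b) else 0) * s (σin b)
        = ovl s σin (C s σout n) (b:ℕ) := by
    intro n hn
    set lam : Fin d → ℝ :=
      fun j => ∑ a : Fin d, if (a:ℕ) < n then T' (σout a) j else 0 with hlamdef
    have hlam : ∀ j, lam j ∈ Set.Icc (0:ℝ) 1 := by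
      intro j
      constructor
      · apply Finset.sum_nonneg
        intro a _
        split_ifs
        · exact hT'.1 _ _
        · exact le_refl 0
      · calc lam j ≤ ∑ a : Fin d, T' (σout a) j := by
              apply Finset.sum_le_sum
              intro a _
              split_ifs
              · exact le_refl _
              · exact hT'.1 _ _
          _ = ∑ i, T' i j := Equiv.sum_comp σout (fun i => T' i j)
          _ = 1 := hT'.2.1 j
    have hinner_s : ∀ a : Fin d,
        ∑ j, (if (a:ℕ) < n then T' (σout a) j else 0) * s j
          = (if (a:ℕ) < n then nv s σout (a:ℕ) else 0) := by
      intro a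
      by_cases h : (a:ℕ) < n
      · simp only [if_pos h]
        rw [TP_rowsum s hd hs hT' (σout a), nv_apply]
      · simp [h]
    have hinner_p : ∀ a : Fin d,
        ∑ j, (if (a:ℕ) < n then T' (σout a) j else 0) * p j
          = (if (a:ℕ) < n then nv r σout (a:ℕ) else 0) := by
      intro a
      by_cases h : (a:ℕ) < n
      · simp only [if_pos h]
        have h2 := congrFun hTp (σout a)
        rw [Matrix.mulVec, dotProduct] at h2
        rw [h2, nv_apply]
      · simp [h]
    have hranges : ∀ g : Fin d → ℝ,
        (∑ a : Fin d, if (a:ℕ) < n then nv g σout (a:ℕ) else 0)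
          = ∑ m ∈ Finset.range n, nv g σout m := by
      intro g
      rw [Fin.sum_univ_eq_sum_range (fun m => if m < n then nv g σout m else 0) d,
        sum_range_trunc (fun m => if m < n then nv g σout m else 0) hn
          (fun m hm _ => if_neg (Nat.not_lt.2 hm))]
      exact Finset.sum_congr rfl
        (fun m hm => if_pos (Finset.mem_range.1 hm))
    have hsum : ∑ j, lam j * s j = C s σout n := by
      rw [hlamdef]
      simp only [Finset.sum_mul]
      rw [Finset.sum_comm]
      rw [Finset.sum_congr rfl (fun a _ => hinner_s a), hranges s]
      rfl
    have hval : ∑ j, lam j * p j = gval s σin p (C s σout n) := by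
      rw [hlamdef]
      simp only [Finset.sum_mul]
      rw [Finset.sum_comm]
      rw [Finset.sum_congr rfl (fun a _ => hinner_p a), hranges r, hRn n hn]
    have := lam_eq_ovl_of_eq s σin p lam (C s σout n) hs hβp hp0 hdist
      (C_nonneg s σout hs n) (C_le s σout hs n) hlam hsum hval
    intro b
    exact this b
  ext i j
  set a : Fin d := σout.symm i with hadef
  set b : Fin d := σin.symm j with hbdef
  have hia : σout a = i := Equiv.apply_symm_apply σout i
  have hjb : σin b = j := Equiv.apply_symm_apply σin j
  have k1 := key ((a:ℕ)+1) (Nat.succ_le_of_lt a.isLt) b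
  have k2 := key ((a:ℕ)) (le_of_lt a.isLt) b
  have hdiff : ∀ a' : Fin d,
      (if (a':ℕ) < (a:ℕ)+1 then T' (σout a') (σin b) else 0)
        - (if (a':ℕ) < (a:ℕ) then T' (σout a') (σin b) else 0)
      = (if a' = a then T' (σout a') (σin b) else 0) := by
    intro a'
    by_cases h2 : a' = a
    · subst h2
      rw [if_pos (Nat.lt_succ_self _), if_neg (lt_irrefl _), if_pos rfl, sub_zero]
    · have hne : (a':ℕ) ≠ (a:ℕ) := fun hc => h2 (Fin.ext hc)
      rw [if_neg h2]
      by_cases h3 : (a':ℕ) < (a:ℕ)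
      · rw [if_pos h3, if_pos (Nat.lt_succ_of_lt h3), sub_self]
      · rw [if_neg h3, if_neg (fun hc => by
          rcases Nat.lt_succ_iff_lt_or_eq.1 hc with h4 | h4
          · exact h3 h4
          · exact hne h4), sub_self]
  have hTab : T' (σout a) (σin b) * s (σin b) = ovM s σout σin (a:ℕ) (b:ℕ) := by
    have hsub : (T' (σout a) (σin b)) * s (σin b)
        = ((∑ a' : Fin d, if (a':ℕ) < (a:ℕ)+1 then T' (σout a') (σin b) else 0)
          - (∑ a' : Fin d, if (a':ℕ) < (a:ℕ) then T' (σout a') (σin b) else 0))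
            * s (σin b) := by
      rw [← Finset.sum_sub_distrib, Finset.sum_congr rfl (fun a' _ => hdiff a'),
        Finset.sum_ite_eq' Finset.univ a (fun a' => T' (σout a') (σin b))]
      simp
    rw [hsub, sub_mul, k1, k2, ovM_eq_diff s σout σin hs]
  rw [← hia, ← hjb]
  have hMv : Mmat s σout σin (σout a) (σin b) = ovM s σout σin (a:ℕ) (b:ℕ) := by
    rw [Mmat, Equiv.symm_apply_apply, Equiv.symm_apply_apply]
  have hTv : Tmat s σout σin (σout a) (σin b) * s (σin b)
      = ovM s σout σin (a:ℕ) (b:ℕ) := by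
    rw [Tmat, div_mul_cancel₀ _ (ne_of_gt (hs (σin b))), hMv]
  have := hTab.trans hTv.symm
  exact mul_right_cancel₀ (ne_of_gt (hs (σin b))) this

end Unique

end Stmt15Aux

/-- if `p` tightly thermomajorizes `r`, then there is a thermal process
`T` with `T p = r` which is an extreme point of `TP(d,s)` and a biplanar extremal
thermal process with orders `(π_in, π_out)`, where `π_in` is a β-order of `p` and
`π_out` a β-order of `r`; if moreover all slopes of `f_p` are different, `T` is the
unique thermal process mapping `p` to `r`. -/
theorem stmt15 (d : ℕ) (hd : 1 ≤ d) (s : Fin d → ℝ) (hs : ∀ i, 0 < s i)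
    (p r : Fin d → ℝ) (hp : ProbVec d p) (hr : ProbVec d r)
    (htight : TightlyThermomajorizes d s p r) :
    ∃ T ∈ TP d s, T.mulVec p = r ∧
      (∃ πin πout : Equiv.Perm (Fin d),
        IsBetaOrder d s p πin ∧ IsBetaOrder d s r πout ∧
        IsBiplanarExtremalTP d s T πin πout) ∧
      ((∀ i j : Fin d, i ≠ j → p i / s i ≠ p j / s j) →
        ∀ T' ∈ TP d s, T'.mulVec p = r → T' = T) := by
  obtain ⟨hp0, hp1⟩ := hp
  obtain ⟨hr0, hr1⟩ := hr
  obtain ⟨-, σout, hβr, helbow⟩ := htight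
  set f : Fin d → ℝ := fun i => -(p i / s i) with hf
  set σin := Tuple.sort f with hσin
  have hβp : IsBetaOrder d s p σin := by
    intro i j hij
    have h := Tuple.monotone_sort f hij
    simp only [Function.comp_apply, hf] at h
    linarith
  refine ⟨Stmt15Aux.Tmat s σout σin, Stmt15Aux.Tmat_mem s σout σin hs,
    Stmt15Aux.Tmat_mulVec s σout σin p r hs hβp hp0 hp1 hr1 helbow,
    ⟨σin, σout, hβp, hβr, Stmt15Aux.Tmat_extreme s σout σin hd hs, ?_, ?_⟩,
    fun hdist T' hT' hTp =>
      Stmt15Aux.T_unique s σout σin p r hd hs hβp hp0 hp1 hr1 hdist helbow T' hT' hTp⟩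
  · rw [Stmt15Aux.Tmat_mul_diag s σout σin hs]
    exact Stmt15Aux.Mmat_extreme s σout σin hs
  · rw [Stmt15Aux.Tmat_mul_diag s σout σin hs]
    exact Stmt15Aux.Mmat_biplanar s σout σin hs
end

section
/- Let T be a biplanar extremal thermal process with orders (π_in, π_out). Then for every probability vector p having π_in as a β-order, the vector T p is an extreme point of p^TP and π_out is a β-order of T p. If moreover all slopes of f_p are different, then T is the unique thermal process mapping p to T p. -/
open Finset
namespace S16
variable {d : ℕ}

def pre (x : Fin d → ℝ) (k : ℕ) : ℝ := ∑ i : Fin d, if (i : ℕ) < k then x i else 0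

lemma pre_zero (x : Fin d → ℝ) : pre x 0 = 0 := by simp [pre]

lemma pre_succ (x : Fin d → ℝ) (k : ℕ) :
    pre x (k+1) = pre x k + (if h : k < d then x ⟨k,h⟩ else 0) := by
  unfold pre
  have : ∀ i : Fin d, (if (i:ℕ) < k+1 then x i else 0)
      = (if (i:ℕ) < k then x i else 0) + (if (i:ℕ) = k then x i else 0) := by
    intro i
    by_cases h1 : (i:ℕ) < k
    · have : (i:ℕ) ≠ k := by omega
      simp [h1, this, Nat.lt_succ_of_lt h1]
    · by_cases h2 : (i:ℕ) = k
      · simp [h1, h2]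
      · have : ¬ (i:ℕ) < k+1 := by omega
        simp [h1, h2, this]
  rw [Finset.sum_congr rfl (fun i _ => this i), Finset.sum_add_distrib]
  congr 1
  by_cases h : k < d
  · rw [dif_pos h, Finset.sum_eq_single ⟨k,h⟩]
    · simp
    · intro b _ hb
      have : (b:ℕ) ≠ k := fun hc => hb (Fin.ext hc)
      simp [this]
    · simp
  · rw [dif_neg h]
    apply Finset.sum_eq_zero
    intro i _
    have : (i:ℕ) ≠ k := by have := i.isLt; omega
    simp [this]

lemma pre_of_le (x : Fin d → ℝ) {k : ℕ} (h : d ≤ k) : pre x k = ∑ i, x i := by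
  unfold pre
  apply Finset.sum_congr rfl
  intro i _
  have : (i:ℕ) < k := lt_of_lt_of_le i.isLt h
  simp [this]

lemma abel_id (X ρ : ℕ → ℝ) (n : ℕ) :
    ∑ k ∈ Finset.range n, (X (k+1) - X k) * ρ k
      = X n * ρ n - X 0 * ρ 0 + ∑ k ∈ Finset.range n, X (k+1) * (ρ k - ρ (k+1)) := by
  induction n with
  | zero => simp
  | succ n ih =>
    rw [Finset.sum_range_succ, Finset.sum_range_succ, ih]
    ring

lemma abel_le (n : ℕ) (X Y ρ : ℕ → ℝ) (hX0 : X 0 = 0) (hY0 : Y 0 = 0)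
    (hρ : ∀ k, ρ (k+1) ≤ ρ k) (hpre : ∀ k, X k ≤ Y k) (htot : X n = Y n) :
    ∑ k ∈ Finset.range n, (X (k+1) - X k) * ρ k
      ≤ ∑ k ∈ Finset.range n, (Y (k+1) - Y k) * ρ k := by
  rw [abel_id, abel_id, hX0, hY0, htot]
  have : ∑ k ∈ Finset.range n, X (k+1) * (ρ k - ρ (k+1))
      ≤ ∑ k ∈ Finset.range n, Y (k+1) * (ρ k - ρ (k+1)) := by
    apply Finset.sum_le_sum
    intro k _
    exact mul_le_mul_of_nonneg_right (hpre (k+1)) (by linarith [hρ k])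
  linarith

lemma abel_eq (n : ℕ) (X Y ρ : ℕ → ℝ) (hX0 : X 0 = 0) (hY0 : Y 0 = 0)
    (hρ : ∀ k, ρ (k+1) ≤ ρ k) (hpre : ∀ k, X k ≤ Y k) (htot : X n = Y n)
    (hstrict : ∀ k, k + 2 ≤ n → ρ (k+1) < ρ k)
    (heq : ∑ k ∈ Finset.range n, (X (k+1) - X k) * ρ k
      = ∑ k ∈ Finset.range n, (Y (k+1) - Y k) * ρ k) :
    ∀ k, k ≤ n → X k = Y k := by
  have hz : ∑ k ∈ Finset.range n, (Y (k+1) - X (k+1)) * (ρ k - ρ (k+1)) = 0 := by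
    have h1 := abel_id X ρ n
    have h2 := abel_id Y ρ n
    rw [h1, h2, hX0, hY0, htot] at heq
    have : ∑ k ∈ Finset.range n, (Y (k+1) - X (k+1)) * (ρ k - ρ (k+1))
        = ∑ k ∈ Finset.range n, Y (k+1) * (ρ k - ρ (k+1))
          - ∑ k ∈ Finset.range n, X (k+1) * (ρ k - ρ (k+1)) := by
      rw [← Finset.sum_sub_distrib]; apply Finset.sum_congr rfl; intros; ring
    rw [this]; linarith
  have hterm : ∀ k ∈ Finset.range n, (Y (k+1) - X (k+1)) * (ρ k - ρ (k+1)) = 0 := by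
    apply (Finset.sum_eq_zero_iff_of_nonneg ?_).mp hz
    intro k _
    exact mul_nonneg (by linarith [hpre (k+1)]) (by linarith [hρ k])
  intro k hk
  rcases Nat.eq_zero_or_pos k with rfl | hk0
  · rw [hX0, hY0]
  · rcases eq_or_lt_of_le hk with rfl | hkn
    · exact htot
    · obtain ⟨j, rfl⟩ : ∃ j, k = j + 1 := ⟨k - 1, by omega⟩
      have hj : j ∈ Finset.range n := Finset.mem_range.mpr (by omega)
      have := hterm j hj
      have hρj : ρ (j+1) < ρ j := hstrict j (by omega)
      rcases mul_eq_zero.mp this with h | h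
      · linarith
      · linarith



def Pkl (N : Fin d → Fin d → ℝ) (k l : ℕ) : ℝ :=
  ∑ a : Fin d, ∑ b : Fin d, if (a:ℕ) < k ∧ (b:ℕ) < l then N a b else 0

lemma pre_col_eq_Pkl (N : Fin d → Fin d → ℝ) (k l : ℕ) :
    pre (fun b => pre (fun a => N a b) k) l = Pkl N k l := by
  unfold pre Pkl
  rw [Finset.sum_comm]
  apply Finset.sum_congr rfl
  intro b _
  by_cases hb : (b:ℕ) < l
  · simp only [hb, if_true, and_true]
  · simp [hb]

lemma row_decomp (N : Fin d → Fin d → ℝ) (k l : ℕ) :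
    pre (fun a => ∑ b, N a b) k
      = Pkl N k l + ∑ a : Fin d, ∑ b : Fin d,
          (if (a:ℕ) < k ∧ l ≤ (b:ℕ) then N a b else 0) := by
  unfold pre Pkl
  rw [← Finset.sum_add_distrib]
  apply Finset.sum_congr rfl
  intro a _
  rw [← Finset.sum_add_distrib]
  by_cases ha : (a:ℕ) < k
  · simp only [ha, if_true, true_and]
    apply Finset.sum_congr rfl
    intro b _
    by_cases hb : (b:ℕ) < l
    · have : ¬ l ≤ (b:ℕ) := by omega
      simp [hb, this]
    · have : l ≤ (b:ℕ) := by omega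
      simp [hb, this]
  · simp [ha]

lemma col_decomp (N : Fin d → Fin d → ℝ) (k l : ℕ) :
    pre (fun b => ∑ a, N a b) l
      = Pkl N k l + ∑ a : Fin d, ∑ b : Fin d,
          (if k ≤ (a:ℕ) ∧ (b:ℕ) < l then N a b else 0) := by
  unfold pre Pkl
  have h1 : (∑ a : Fin d, ∑ b : Fin d, if (a:ℕ) < k ∧ (b:ℕ) < l then N a b else 0)
      = ∑ b : Fin d, ∑ a : Fin d, if (a:ℕ) < k ∧ (b:ℕ) < l then N a b else 0 :=
    Finset.sum_comm
  have h2 : (∑ a : Fin d, ∑ b : Fin d, if k ≤ (a:ℕ) ∧ (b:ℕ) < l then N a b else 0)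
      = ∑ b : Fin d, ∑ a : Fin d, if k ≤ (a:ℕ) ∧ (b:ℕ) < l then N a b else 0 :=
    Finset.sum_comm
  rw [h1, h2, ← Finset.sum_add_distrib]
  apply Finset.sum_congr rfl
  intro b _
  rw [← Finset.sum_add_distrib]
  by_cases hb : (b:ℕ) < l
  · simp only [hb, if_true, and_true]
    apply Finset.sum_congr rfl
    intro a _
    by_cases ha : (a:ℕ) < k
    · have : ¬ k ≤ (a:ℕ) := by omega
      simp [ha, this]
    · have : k ≤ (a:ℕ) := by omega
      simp [ha, this]
  · simp [hb]

lemma Pkl_le_row (N : Fin d → Fin d → ℝ) (hN : ∀ a b, 0 ≤ N a b) (k l : ℕ) :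
    Pkl N k l ≤ pre (fun a => ∑ b, N a b) k := by
  rw [row_decomp N k l]
  have : 0 ≤ ∑ a : Fin d, ∑ b : Fin d,
      (if (a:ℕ) < k ∧ l ≤ (b:ℕ) then N a b else 0) := by
    apply Finset.sum_nonneg; intro a _; apply Finset.sum_nonneg; intro b _
    by_cases h : (a:ℕ) < k ∧ l ≤ (b:ℕ) <;> simp [h, hN a b]
  linarith

lemma Pkl_le_col (N : Fin d → Fin d → ℝ) (hN : ∀ a b, 0 ≤ N a b) (k l : ℕ) :
    Pkl N k l ≤ pre (fun b => ∑ a, N a b) l := by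
  rw [col_decomp N k l]
  have : 0 ≤ ∑ a : Fin d, ∑ b : Fin d,
      (if k ≤ (a:ℕ) ∧ (b:ℕ) < l then N a b else 0) := by
    apply Finset.sum_nonneg; intro a _; apply Finset.sum_nonneg; intro b _
    by_cases h : k ≤ (a:ℕ) ∧ (b:ℕ) < l <;> simp [h, hN a b]
  linarith

/-- staircase: nonzero entries don't cross -/
lemma Pkl_eq_min (N : Fin d → Fin d → ℝ) (hN : ∀ a b, 0 ≤ N a b)
    (hst : ∀ a a' b b' : Fin d, (a:ℕ) < (a':ℕ) → (b':ℕ) < (b:ℕ) →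
      N a b ≠ 0 → N a' b' ≠ 0 → False) (k l : ℕ) :
    Pkl N k l = min (pre (fun a => ∑ b, N a b) k) (pre (fun b => ∑ a, N a b) l) := by
  apply le_antisymm
  · exact le_min (Pkl_le_row N hN k l) (Pkl_le_col N hN k l)
  · by_contra hcon
    push_neg at hcon
    have h1 : Pkl N k l < pre (fun a => ∑ b, N a b) k :=
      lt_of_lt_of_le hcon (min_le_left _ _)
    have h2 : Pkl N k l < pre (fun b => ∑ a, N a b) l :=
      lt_of_lt_of_le hcon (min_le_right _ _)
    rw [row_decomp N k l] at h1
    rw [col_decomp N k l] at h2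
    have e1 : ∃ a b : Fin d, (if (a:ℕ) < k ∧ l ≤ (b:ℕ) then N a b else 0) ≠ 0 := by
      by_contra he
      push_neg at he
      have : ∑ a : Fin d, ∑ b : Fin d,
          (if (a:ℕ) < k ∧ l ≤ (b:ℕ) then N a b else 0) = 0 := by
        apply Finset.sum_eq_zero; intro a _; apply Finset.sum_eq_zero; intro b _
        exact he a b
      rw [this] at h1; linarith
    have e2 : ∃ a b : Fin d, (if k ≤ (a:ℕ) ∧ (b:ℕ) < l then N a b else 0) ≠ 0 := by
      by_contra he
      push_neg at he
      have : ∑ a : Fin d, ∑ b : Fin d,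
          (if k ≤ (a:ℕ) ∧ (b:ℕ) < l then N a b else 0) = 0 := by
        apply Finset.sum_eq_zero; intro a _; apply Finset.sum_eq_zero; intro b _
        exact he a b
      rw [this] at h2; linarith
    obtain ⟨a, b, hab⟩ := e1
    obtain ⟨a', b', hab'⟩ := e2
    by_cases c1 : (a:ℕ) < k ∧ l ≤ (b:ℕ)
    · by_cases c2 : k ≤ (a':ℕ) ∧ (b':ℕ) < l
      · rw [if_pos c1] at hab
        rw [if_pos c2] at hab'
        exact hst a a' b b' (by omega) (by omega) hab hab'
      · rw [if_neg c2] at hab'; exact hab' rfl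
    · rw [if_neg c1] at hab; exact hab rfl


/-- sum of `w b * ρF b` as a range-d Abel-ready sum -/
lemma sum_mul_eq_range (w ρF : Fin d → ℝ) (ρN : ℕ → ℝ)
    (hmatch : ∀ (l : ℕ) (h : l < d), ρN l = ρF ⟨l,h⟩) :
    ∑ b : Fin d, w b * ρF b
      = ∑ l ∈ Finset.range d, (pre w (l+1) - pre w l) * ρN l := by
  have hf : ∀ b : Fin d, w b * ρF b = (pre w ((b:ℕ)+1) - pre w (b:ℕ)) * ρN (b:ℕ) := by
    intro b
    rw [pre_succ w (b:ℕ), hmatch (b:ℕ) b.isLt]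
    rw [dif_pos b.isLt]
    simp [Fin.eta]
  calc ∑ b : Fin d, w b * ρF b
      = ∑ b : Fin d, (fun l => (pre w (l+1) - pre w l) * ρN l) (b:ℕ) := by
        apply Finset.sum_congr rfl; intro b _; exact hf b
    _ = ∑ l ∈ Finset.range d, (pre w (l+1) - pre w l) * ρN l :=
        Fin.sum_univ_eq_sum_range (fun l => (pre w (l + 1) - pre w l) * ρN l) d

lemma Pkl_top (N : Fin d → Fin d → ℝ) (k : ℕ) :
    Pkl N k d = pre (fun a => ∑ b, N a b) k := by
  rw [row_decomp N k d]
  have : ∑ a : Fin d, ∑ b : Fin d, (if (a:ℕ) < k ∧ d ≤ (b:ℕ) then N a b else 0) = 0 := by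
    apply Finset.sum_eq_zero; intro a _; apply Finset.sum_eq_zero; intro b _
    have : ¬ ((a:ℕ) < k ∧ d ≤ (b:ℕ)) := by
      intro hc; exact absurd b.isLt (by omega)
    simp [this]
  rw [this, add_zero]

section TPfacts
variable {s : Fin d → ℝ} (πin πout : Equiv.Perm (Fin d))

/-- the permuted matrix `N` -/
def toN (s : Fin d → ℝ) (πin πout : Equiv.Perm (Fin d))
    (T : Matrix (Fin d) (Fin d) ℝ) : Fin d → Fin d → ℝ :=
  fun a b => T (πout a) (πin b) * s (πin b)

lemma tp_entry_rowsum (hd : 1 ≤ d) (hs : ∀ i, 0 < s i) {T : Matrix (Fin d) (Fin d) ℝ}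
    (hT : T ∈ TP d s) (i : Fin d) : ∑ j, T i j * s j = s i := by
  have hZ : 0 < ∑ k, s k := by
    haveI : Nonempty (Fin d) := Fin.pos_iff_nonempty.mp hd
    exact Finset.sum_pos (fun i _ => hs i) Finset.univ_nonempty
  have h := congrFun hT.2.2 i
  simp only [Matrix.mulVec, dotProduct] at h
  have h2 : (∑ j, T i j * (s j / ∑ k, s k)) * (∑ k, s k) = (s i / ∑ k, s k) * (∑ k, s k) := by
    rw [h]
  rw [Finset.sum_mul, div_mul_cancel₀ _ (ne_of_gt hZ)] at h2
  rw [← h2]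
  apply Finset.sum_congr rfl
  intro j _
  field_simp

lemma toN_rowsum (hd : 1 ≤ d) (hs : ∀ i, 0 < s i) {T : Matrix (Fin d) (Fin d) ℝ}
    (hT : T ∈ TP d s) (a : Fin d) : ∑ b, toN s πin πout T a b = s (πout a) := by
  unfold toN
  rw [Equiv.sum_comp πin (fun j => T (πout a) j * s j)]
  exact tp_entry_rowsum hd hs hT (πout a)

lemma toN_colsum {T : Matrix (Fin d) (Fin d) ℝ}
    (hT : T ∈ TP d s) (b : Fin d) : ∑ a, toN s πin πout T a b = s (πin b) := by
  unfold toN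
  rw [← Finset.sum_mul]
  rw [Equiv.sum_comp πout (fun i => T i (πin b))]
  rw [hT.2.1 (πin b), one_mul]

lemma toN_nonneg (hs : ∀ i, 0 < s i) {T : Matrix (Fin d) (Fin d) ℝ}
    (hT : T ∈ TP d s) (a b : Fin d) : 0 ≤ toN s πin πout T a b :=
  mul_nonneg (hT.1 _ _) (hs _).le

lemma mulVec_perm (hs : ∀ i, 0 < s i) (T : Matrix (Fin d) (Fin d) ℝ)
    (p : Fin d → ℝ) (a : Fin d) :
    (T.mulVec p) (πout a)
      = ∑ b, toN s πin πout T a b * (p (πin b) / s (πin b)) := by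
  simp only [Matrix.mulVec, dotProduct]
  rw [← Equiv.sum_comp πin (fun j => T (πout a) j * p j)]
  apply Finset.sum_congr rfl
  intro b _
  unfold toN
  have := (hs (πin b)).ne'
  field_simp

lemma toN_stair (hs : ∀ i, 0 < s i) {T : Matrix (Fin d) (Fin d) ℝ}
    (hbp : BiplanarWithOrders d d (T * Matrix.diagonal s) πin πout) :
    ∀ a a' b b' : Fin d, (a:ℕ) < (a':ℕ) → (b':ℕ) < (b:ℕ) →
      toN s πin πout T a b ≠ 0 → toN s πin πout T a' b' ≠ 0 → False := by
  intro a a' b b' haa hbb hN hN'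
  have hMab : (T * Matrix.diagonal s) (πout a) (πin b) = toN s πin πout T a b := by
    rw [Matrix.mul_diagonal]; rfl
  have hMab' : (T * Matrix.diagonal s) (πout a') (πin b') = toN s πin πout T a' b' := by
    rw [Matrix.mul_diagonal]; rfl
  have hne : (πout a, πin b) ≠ (πout a', πin b') := by
    intro hc
    have h1 : πout a = πout a' := congrArg Prod.fst hc
    have h2 : a = a' := πout.injective h1
    subst h2
    exact lt_irrefl _ haa
  have := hbp (πout a) (πout a') (πin b) (πin b') hne
    (hMab ▸ hN) (hMab' ▸ hN')
  apply this
  rw [Equiv.symm_apply_apply, Equiv.symm_apply_apply,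
    Equiv.symm_apply_apply, Equiv.symm_apply_apply]
  apply mul_neg_of_neg_of_pos
  · have : ((a:ℕ) : ℤ) < ((a':ℕ) : ℤ) := by exact_mod_cast haa
    linarith
  · have : ((b':ℕ) : ℤ) < ((b:ℕ) : ℤ) := by exact_mod_cast hbb
    linarith

lemma pre_succ_fin (x : Fin d → ℝ) (i : Fin d) :
    pre x ((i:ℕ)+1) = pre x (i:ℕ) + x i := by
  rw [pre_succ, dif_pos i.isLt]

lemma pre_mulVec (hs : ∀ i, 0 < s i) (πin πout : Equiv.Perm (Fin d))
    (T₀ : Matrix (Fin d) (Fin d) ℝ) (p : Fin d → ℝ) (k : ℕ) :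
    pre (fun a => (T₀.mulVec p) (πout a)) k
      = ∑ b : Fin d, (pre (fun a => toN s πin πout T₀ a b) k)
          * (p (πin b) / s (πin b)) := by
  unfold pre
  have step1 : ∀ a : Fin d,
      (if (a:ℕ) < k then (T₀.mulVec p) (πout a) else 0)
        = ∑ b : Fin d, (if (a:ℕ) < k then toN s πin πout T₀ a b else 0)
            * (p (πin b) / s (πin b)) := by
    intro a
    by_cases ha : (a:ℕ) < k
    · rw [if_pos ha, mulVec_perm πin πout hs T₀ p a]
      apply Finset.sum_congr rfl
      intro b _
      rw [if_pos ha]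
    · rw [if_neg ha]
      symm
      apply Finset.sum_eq_zero
      intro b _
      rw [if_neg ha, zero_mul]
  rw [Finset.sum_congr rfl (fun a _ => step1 a), Finset.sum_comm]
  apply Finset.sum_congr rfl
  intro b _
  rw [← Finset.sum_mul]

/-- Central comparison machinery: rewrite as range sum and supply Abel data. -/
lemma pre_mulVec_range (hs : ∀ i, 0 < s i) (πin πout : Equiv.Perm (Fin d))
    (T₀ : Matrix (Fin d) (Fin d) ℝ) (p : Fin d → ℝ) (k : ℕ)
    (ρN : ℕ → ℝ)
    (hmatch : ∀ (l : ℕ) (h : l < d), ρN l = p (πin ⟨l,h⟩) / s (πin ⟨l,h⟩)) :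
    pre (fun a => (T₀.mulVec p) (πout a)) k
      = ∑ l ∈ Finset.range d,
          (Pkl (toN s πin πout T₀) k (l+1) - Pkl (toN s πin πout T₀) k l) * ρN l := by
  rw [pre_mulVec hs πin πout T₀ p k]
  rw [sum_mul_eq_range (fun b => pre (fun a => toN s πin πout T₀ a b) k)
    (fun b => p (πin b) / s (πin b)) ρN (fun l h => hmatch l h)]
  apply Finset.sum_congr rfl
  intro l _
  rw [pre_col_eq_Pkl, pre_col_eq_Pkl]

/-- Bounds for `Pkl` of a thermal process's permuted matrix. -/
lemma Pkl_tp_le (hd : 1 ≤ d) (hs : ∀ i, 0 < s i) (πin πout : Equiv.Perm (Fin d))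
    {T₀ : Matrix (Fin d) (Fin d) ℝ} (hT₀ : T₀ ∈ TP d s) (k l : ℕ) :
    Pkl (toN s πin πout T₀) k l
      ≤ min (pre (fun a => s (πout a)) k) (pre (fun b => s (πin b)) l) := by
  have hrow : (fun a => ∑ b, toN s πin πout T₀ a b) = fun a => s (πout a) :=
    funext (toN_rowsum πin πout hd hs hT₀)
  have hcol : (fun b => ∑ a, toN s πin πout T₀ a b) = fun b => s (πin b) :=
    funext (toN_colsum πin πout hT₀)
  apply le_min
  · have := Pkl_le_row (toN s πin πout T₀) (toN_nonneg πin πout hs hT₀) k l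
    rwa [hrow] at this
  · have := Pkl_le_col (toN s πin πout T₀) (toN_nonneg πin πout hs hT₀) k l
    rwa [hcol] at this

lemma Pkl_tp_eq (hd : 1 ≤ d) (hs : ∀ i, 0 < s i) (πin πout : Equiv.Perm (Fin d))
    {T : Matrix (Fin d) (Fin d) ℝ} (hT : T ∈ TP d s)
    (hst : ∀ a a' b b' : Fin d, (a:ℕ) < (a':ℕ) → (b':ℕ) < (b:ℕ) →
      toN s πin πout T a b ≠ 0 → toN s πin πout T a' b' ≠ 0 → False) (k l : ℕ) :
    Pkl (toN s πin πout T) k l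
      = min (pre (fun a => s (πout a)) k) (pre (fun b => s (πin b)) l) := by
  have hrow : (fun a => ∑ b, toN s πin πout T a b) = fun a => s (πout a) :=
    funext (toN_rowsum πin πout hd hs hT)
  have hcol : (fun b => ∑ a, toN s πin πout T a b) = fun b => s (πin b) :=
    funext (toN_colsum πin πout hT)
  have := Pkl_eq_min (toN s πin πout T) (toN_nonneg πin πout hs hT) hst k l
  rwa [hrow, hcol] at this

lemma Pkl_tp_top (hd : 1 ≤ d) (hs : ∀ i, 0 < s i) (πin πout : Equiv.Perm (Fin d))
    {T₀ : Matrix (Fin d) (Fin d) ℝ} (hT₀ : T₀ ∈ TP d s) (k : ℕ) :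
    Pkl (toN s πin πout T₀) k d = pre (fun a => s (πout a)) k := by
  rw [Pkl_top]
  congr 1
  exact funext (toN_rowsum πin πout hd hs hT₀)

lemma Pkl_zero (N : Fin d → Fin d → ℝ) (k : ℕ) : Pkl N k 0 = 0 := by
  rw [← pre_col_eq_Pkl, pre_zero]

lemma prefix_le (hd : 1 ≤ d) (hs : ∀ i, 0 < s i) (πin πout : Equiv.Perm (Fin d))
    {T T₂ : Matrix (Fin d) (Fin d) ℝ} (hT : T ∈ TP d s) (hT₂ : T₂ ∈ TP d s)
    (hst : ∀ a a' b b' : Fin d, (a:ℕ) < (a':ℕ) → (b':ℕ) < (b:ℕ) →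
      toN s πin πout T a b ≠ 0 → toN s πin πout T a' b' ≠ 0 → False)
    (p : Fin d → ℝ) (hord : IsBetaOrder d s p πin) (k : ℕ) :
    pre (fun a => (T₂.mulVec p) (πout a)) k
      ≤ pre (fun a => (T.mulVec p) (πout a)) k := by
  set ρN : ℕ → ℝ := fun l =>
    p (πin ⟨min l (d-1), by omega⟩) / s (πin ⟨min l (d-1), by omega⟩) with hρN
  have hmatch : ∀ (l : ℕ) (h : l < d), ρN l = p (πin ⟨l,h⟩) / s (πin ⟨l,h⟩) := by
    intro l h
    have hm : (⟨min l (d-1), by omega⟩ : Fin d) = ⟨l, h⟩ := Fin.ext (by simp; omega)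
    rw [hρN]
    simp only [hm]
  have hmono : ∀ l, ρN (l+1) ≤ ρN l := by
    intro l
    exact hord ⟨min l (d-1), by omega⟩ ⟨min (l+1) (d-1), by omega⟩
      (Fin.mk_le_mk.mpr (by omega))
  rw [pre_mulVec_range hs πin πout T₂ p k ρN hmatch,
    pre_mulVec_range hs πin πout T p k ρN hmatch]
  apply abel_le d (fun l => Pkl (toN s πin πout T₂) k l)
    (fun l => Pkl (toN s πin πout T) k l) ρN
  · exact Pkl_zero _ k
  · exact Pkl_zero _ k
  · exact hmono
  · intro l
    calc Pkl (toN s πin πout T₂) k l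
        ≤ min (pre (fun a => s (πout a)) k) (pre (fun b => s (πin b)) l) :=
          Pkl_tp_le hd hs πin πout hT₂ k l
      _ = Pkl (toN s πin πout T) k l := (Pkl_tp_eq hd hs πin πout hT hst k l).symm
  · rw [Pkl_tp_top hd hs πin πout hT₂ k, Pkl_tp_top hd hs πin πout hT k]

lemma eq_of_mulVec_eq (hd : 1 ≤ d) (hs : ∀ i, 0 < s i) (πin πout : Equiv.Perm (Fin d))
    {T T₂ : Matrix (Fin d) (Fin d) ℝ} (hT : T ∈ TP d s) (hT₂ : T₂ ∈ TP d s)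
    (hst : ∀ a a' b b' : Fin d, (a:ℕ) < (a':ℕ) → (b':ℕ) < (b:ℕ) →
      toN s πin πout T a b ≠ 0 → toN s πin πout T a' b' ≠ 0 → False)
    (p : Fin d → ℝ) (hord : IsBetaOrder d s p πin)
    (hdist : ∀ i j : Fin d, i ≠ j → p i / s i ≠ p j / s j)
    (hq : T₂.mulVec p = T.mulVec p) : T₂ = T := by
  set ρN : ℕ → ℝ := fun l =>
    p (πin ⟨min l (d-1), by omega⟩) / s (πin ⟨min l (d-1), by omega⟩) with hρN
  have hmatch : ∀ (l : ℕ) (h : l < d), ρN l = p (πin ⟨l,h⟩) / s (πin ⟨l,h⟩) := by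
    intro l h
    have hm : (⟨min l (d-1), by omega⟩ : Fin d) = ⟨l, h⟩ := Fin.ext (by simp; omega)
    rw [hρN]
    simp only [hm]
  have hmono : ∀ l, ρN (l+1) ≤ ρN l := by
    intro l
    exact hord ⟨min l (d-1), by omega⟩ ⟨min (l+1) (d-1), by omega⟩
      (Fin.mk_le_mk.mpr (by omega))
  have hstrict : ∀ l, l + 2 ≤ d → ρN (l+1) < ρN l := by
    intro l hl
    have h1 : l + 1 < d := by omega
    have h0 : l < d := by omega
    rw [hmatch (l+1) h1, hmatch l h0]
    apply lt_of_le_of_ne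
    · exact hord ⟨l, h0⟩ ⟨l+1, h1⟩ (Fin.mk_le_mk.mpr (by omega))
    · apply hdist
      intro hc
      have : (⟨l+1, h1⟩ : Fin d) = ⟨l, h0⟩ := πin.injective hc
      have := Fin.mk.inj_iff.mp this
      omega
  have hXY : ∀ (k l : ℕ), l ≤ d →
      Pkl (toN s πin πout T₂) k l = Pkl (toN s πin πout T) k l := by
    intro k
    apply abel_eq d (fun l => Pkl (toN s πin πout T₂) k l)
      (fun l => Pkl (toN s πin πout T) k l) ρN
      (Pkl_zero _ k) (Pkl_zero _ k) hmono
    · intro l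
      calc Pkl (toN s πin πout T₂) k l
          ≤ min (pre (fun a => s (πout a)) k) (pre (fun b => s (πin b)) l) :=
            Pkl_tp_le hd hs πin πout hT₂ k l
        _ = Pkl (toN s πin πout T) k l := (Pkl_tp_eq hd hs πin πout hT hst k l).symm
    · rw [Pkl_tp_top hd hs πin πout hT₂ k, Pkl_tp_top hd hs πin πout hT k]
    · exact hstrict
    · rw [← pre_mulVec_range hs πin πout T₂ p k ρN hmatch,
        ← pre_mulVec_range hs πin πout T p k ρN hmatch, hq]
  have hcol : ∀ (k : ℕ) (b : Fin d),
      pre (fun a => toN s πin πout T₂ a b) k = pre (fun a => toN s πin πout T a b) k := by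
    intro k b
    have h1 := pre_succ_fin (fun b' => pre (fun a => toN s πin πout T₂ a b') k) b
    have h2 := pre_succ_fin (fun b' => pre (fun a => toN s πin πout T a b') k) b
    simp only [pre_col_eq_Pkl] at h1 h2
    have e1 := hXY k ((b:ℕ)+1) b.isLt
    have e2 := hXY k (b:ℕ) (le_of_lt b.isLt)
    rw [e1, e2] at h1
    linarith [h1, h2]
  have hN : ∀ a b, toN s πin πout T₂ a b = toN s πin πout T a b := by
    intro a b
    have h1 := pre_succ_fin (fun a' => toN s πin πout T₂ a' b) a
    have h2 := pre_succ_fin (fun a' => toN s πin πout T a' b) a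
    have e1 := hcol ((a:ℕ)+1) b
    have e2 := hcol (a:ℕ) b
    rw [e1, e2] at h1
    -- h1 : pre (col T) (a+1) = pre (col T) a + toN T₂ a b ; h2 : = ... + toN T a b
    rw [h2] at h1
    linarith
  apply Matrix.ext
  intro i j
  have h := hN (πout.symm i) (πin.symm j)
  unfold toN at h
  rw [Equiv.apply_symm_apply, Equiv.apply_symm_apply] at h
  exact mul_right_cancel₀ (hs j).ne' h

lemma out_beta (hd : 1 ≤ d) (hs : ∀ i, 0 < s i) (πin πout : Equiv.Perm (Fin d))
    {T : Matrix (Fin d) (Fin d) ℝ} (hT : T ∈ TP d s)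
    (hst : ∀ a a' b b' : Fin d, (a:ℕ) < (a':ℕ) → (b':ℕ) < (b:ℕ) →
      toN s πin πout T a b ≠ 0 → toN s πin πout T a' b' ≠ 0 → False)
    (p : Fin d → ℝ) (hord : IsBetaOrder d s p πin) :
    IsBetaOrder d s (T.mulVec p) πout := by
  intro i j hij
  rcases eq_or_lt_of_le hij with rfl | hlt
  · exact le_refl _
  have hij' : (i:ℕ) < (j:ℕ) := hlt
  have hNneg := toN_nonneg πin πout hs hT
  have hrow := toN_rowsum πin πout hd hs hT
  have hne : (Finset.univ.filter (fun b => toN s πin πout T i b ≠ 0)).Nonempty := by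
    by_contra h
    rw [Finset.not_nonempty_iff_eq_empty, Finset.filter_eq_empty_iff] at h
    have hz : ∑ b, toN s πin πout T i b = 0 :=
      Finset.sum_eq_zero (fun b hb => not_not.mp (h hb))
    rw [hrow i] at hz
    exact (hs (πout i)).ne' hz
  set bs := (Finset.univ.filter (fun b => toN s πin πout T i b ≠ 0)).max' hne with hbs
  have hbsmem := (Finset.univ.filter (fun b => toN s πin πout T i b ≠ 0)).max'_mem hne
  rw [Finset.mem_filter] at hbsmem
  have hNibs : toN s πin πout T i bs ≠ 0 := hbsmem.2
  set t := p (πin bs) / s (πin bs) with ht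
  have h1 : t * s (πout i) ≤ (T.mulVec p) (πout i) := by
    rw [mulVec_perm πin πout hs T p i, ← hrow i, Finset.mul_sum]
    apply Finset.sum_le_sum
    intro b _
    by_cases hb : toN s πin πout T i b = 0
    · rw [hb]; simp
    · have hmem : b ∈ Finset.univ.filter (fun b => toN s πin πout T i b ≠ 0) :=
        Finset.mem_filter.mpr ⟨Finset.mem_univ b, hb⟩
      have hble : b ≤ bs := Finset.le_max' _ b hmem
      have := hord b bs hble
      rw [mul_comm]
      exact mul_le_mul_of_nonneg_left this (hNneg i b)
  have h2 : (T.mulVec p) (πout j) ≤ t * s (πout j) := by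
    rw [mulVec_perm πin πout hs T p j, ← hrow j, Finset.mul_sum]
    apply Finset.sum_le_sum
    intro b _
    by_cases hb : toN s πin πout T j b = 0
    · rw [hb]; simp
    · have hble : bs ≤ b := by
        by_contra hbc
        push_neg at hbc
        exact hst i j bs b hij' hbc hNibs hb
      have hcmp := hord bs b hble
      have hnn := hNneg j b
      nlinarith [hcmp, hnn]
  rw [div_le_div_iff₀ (hs (πout j)) (hs (πout i))]
  nlinarith [hs (πout i), hs (πout j), h1, h2]

end TPfacts
end S16

open S16 in
/-- if `T` is a biplanar extremal thermal process with orders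
`(π_in, π_out)`, then for every probability vector `p` having `π_in` as a β-order,
`T p` is an extreme point of `p^TP` with β-order `π_out`; if all slopes of `f_p` are
different, `T` is the unique thermal process mapping `p` to `T p`. -/
theorem stmt16 (d : ℕ) (hd : 1 ≤ d) (s : Fin d → ℝ) (hs : ∀ i, 0 < s i)
    (T : Matrix (Fin d) (Fin d) ℝ) (πin πout : Equiv.Perm (Fin d))
    (hT : IsBiplanarExtremalTP d s T πin πout)
    (p : Fin d → ℝ) (hp : ProbVec d p) (hord : IsBetaOrder d s p πin) :
    T.mulVec p ∈ Set.extremePoints ℝ (achievable d s p) ∧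
    IsBetaOrder d s (T.mulVec p) πout ∧
    ((∀ i j : Fin d, i ≠ j → p i / s i ≠ p j / s j) →
      ∀ T' ∈ TP d s, T'.mulVec p = T.mulVec p → T' = T) := by
  obtain ⟨hTex, hMex, hbp⟩ := hT
  have hTmem : T ∈ TP d s := hTex.1
  have hst := toN_stair πin πout hs hbp
  refine ⟨?_, ?_, ?_⟩
  · -- extreme point of `p^TP`
    refine ⟨⟨T, hTmem, rfl⟩, ?_⟩
    intro x₁ hx₁ x₂ hx₂ hseg
    obtain ⟨T₁, hT₁, rfl⟩ := hx₁
    obtain ⟨T₂, hT₂, rfl⟩ := hx₂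
    obtain ⟨θ₁, θ₂, hθ₁, hθ₂, hθsum, hcomb⟩ := hseg
    have key : ∀ T₀ : Matrix (Fin d) (Fin d) ℝ,
        (∀ k, pre (fun a => (T₀.mulVec p) (πout a)) k
            = pre (fun a => (T.mulVec p) (πout a)) k) →
        T₀.mulVec p = T.mulVec p := by
      intro T₀ hk
      funext i
      have h1 := pre_succ_fin (fun a => (T₀.mulVec p) (πout a)) (πout.symm i)
      have h2 := pre_succ_fin (fun a => (T.mulVec p) (πout a)) (πout.symm i)
      have e1 := hk ((πout.symm i : Fin d) : ℕ)
      have e2 := hk (((πout.symm i : Fin d) : ℕ) + 1)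
      have hx : (T₀.mulVec p) (πout (πout.symm i)) = (T.mulVec p) (πout (πout.symm i)) := by
        linarith [h1, h2, e1, e2]
      rwa [Equiv.apply_symm_apply] at hx
    have hple1 := fun k => prefix_le hd hs πin πout hTmem hT₁ hst p hord k
    have hple2 := fun k => prefix_le hd hs πin πout hTmem hT₂ hst p hord k
    have hpre_eq : ∀ k, pre (fun a => (T₁.mulVec p) (πout a)) k
          = pre (fun a => (T.mulVec p) (πout a)) k
        ∧ pre (fun a => (T₂.mulVec p) (πout a)) k
          = pre (fun a => (T.mulVec p) (πout a)) k := by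
      intro k
      have hlin : pre (fun a => (θ₁ • (T₁.mulVec p) + θ₂ • (T₂.mulVec p)) (πout a)) k
          = θ₁ * pre (fun a => (T₁.mulVec p) (πout a)) k
            + θ₂ * pre (fun a => (T₂.mulVec p) (πout a)) k := by
        unfold S16.pre
        rw [Finset.mul_sum, Finset.mul_sum, ← Finset.sum_add_distrib]
        apply Finset.sum_congr rfl
        intro a _
        by_cases h : (a:ℕ) < k <;> simp [h]
      have hC : pre (fun a => (θ₁ • (T₁.mulVec p) + θ₂ • (T₂.mulVec p)) (πout a)) k
          = pre (fun a => (T.mulVec p) (πout a)) k := by rw [hcomb]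
      set A := pre (fun a => (T₁.mulVec p) (πout a)) k with hA
      set B := pre (fun a => (T₂.mulVec p) (πout a)) k with hB
      set C := pre (fun a => (T.mulVec p) (πout a)) k with hCdef
      have hsum : θ₁ * A + θ₂ * B = C := by rw [← hlin, hC]
      have hzero : θ₁ * (C - A) + θ₂ * (C - B) = 0 := by
        have : θ₁ * (C - A) + θ₂ * (C - B) = (θ₁ + θ₂) * C - (θ₁ * A + θ₂ * B) := by ring
        rw [this, hθsum, hsum, one_mul, sub_self]
      have hCA : 0 ≤ θ₁ * (C - A) := mul_nonneg hθ₁.le (sub_nonneg.mpr (hple1 k))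
      have hCB : 0 ≤ θ₂ * (C - B) := mul_nonneg hθ₂.le (sub_nonneg.mpr (hple2 k))
      have hCA0 : θ₁ * (C - A) = 0 := by linarith
      have hCB0 : θ₂ * (C - B) = 0 := by linarith
      constructor
      · rcases mul_eq_zero.mp hCA0 with h | h
        · exact absurd h (ne_of_gt hθ₁)
        · linarith
      · rcases mul_eq_zero.mp hCB0 with h | h
        · exact absurd h (ne_of_gt hθ₂)
        · linarith
    exact key T₁ (fun k => (hpre_eq k).1)
  · exact out_beta hd hs πin πout hTmem hst p hord
  · intro hdist T' hT' hq
    exact eq_of_mulVec_eq hd hs πin πout hTmem hT' hst p hord hdist hq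
end

section
/- For d = 2 and s = (1, q) with 0 < q ≤ 1, the set of thermal processes is exactly TP(2,s) = { (1−α)·I + α·B : α ∈ [0,1] }, where I is the 2×2 identity matrix and B is the matrix with rows (1−q, 1) and (q, 0); in particular, I and B are the only extreme points of TP(2,s). -/
/-- for `d = 2` and `s = (1, q)` with `0 < q ≤ 1`, the set of thermal
processes is exactly `{(1-α)·I + α·B : α ∈ [0,1]}` where `B = [[1-q, 1], [q, 0]]`;
in particular `I` and `B` are the only extreme points of `TP(2,s)`. -/
theorem stmt17 (q : ℝ) (hq0 : 0 < q) (hq1 : q ≤ 1) :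
    TP 2 ![1, q] =
      {M : Matrix (Fin 2) (Fin 2) ℝ | ∃ α ∈ Set.Icc (0 : ℝ) 1,
        M = (1 - α) • (1 : Matrix (Fin 2) (Fin 2) ℝ) +
          α • (Matrix.of ![![1 - q, 1], ![q, 0]])} ∧
    Set.extremePoints ℝ (TP 2 ![1, q]) =
      {(1 : Matrix (Fin 2) (Fin 2) ℝ), Matrix.of ![![1 - q, 1], ![q, 0]]} := by
  have hZ : (0:ℝ) < 1 + q := by linarith
  have hZ' : (1:ℝ) + q ≠ 0 := ne_of_gt hZ
  set B : Matrix (Fin 2) (Fin 2) ℝ := Matrix.of ![![1 - q, 1], ![q, 0]] with hB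
  -- entry computation for the parametrized family
  have hent : ∀ α : ℝ, ∀ i j : Fin 2,
      ((1 - α) • (1 : Matrix (Fin 2) (Fin 2) ℝ) + α • B) i j
        = (1 - α) * (1 : Matrix (Fin 2) (Fin 2) ℝ) i j + α * B i j := by
    intro α i j
    simp [Matrix.add_apply, Matrix.smul_apply, smul_eq_mul]
  have key : TP 2 ![1, q] = {M : Matrix (Fin 2) (Fin 2) ℝ | ∃ α ∈ Set.Icc (0 : ℝ) 1,
      M = (1 - α) • (1 : Matrix (Fin 2) (Fin 2) ℝ) + α • B} := by
    ext T
    constructor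
    · rintro ⟨hnn, hcol, hfix⟩
      have hc0 := hcol 0
      have hc1 := hcol 1
      simp [Fin.sum_univ_two] at hc0 hc1
      have h0 := congrFun hfix 0
      simp [Matrix.mulVec, dotProduct, Fin.sum_univ_two] at h0
      have hT00 : T 0 0 + T 0 1 * q = 1 := by
        field_simp at h0; linarith
      refine ⟨T 0 1, ⟨hnn 0 1, by have := hnn 1 1; linarith⟩, ?_⟩
      ext i j
      rw [hent]
      fin_cases i <;> fin_cases j <;>
        simp [hB, Matrix.one_apply] <;> linarith
    · rintro ⟨α, ⟨ha0, ha1⟩, rfl⟩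
      have hαq : α * q ≤ 1 := by nlinarith
      refine ⟨?_, ?_, ?_⟩
      · intro i j
        rw [hent]
        fin_cases i <;> fin_cases j <;>
          simp [hB, Matrix.one_apply] <;> nlinarith
      · intro j
        fin_cases j <;>
          simp [Fin.sum_univ_two, hent, hB, Matrix.one_apply] <;> ring
      · funext i
        fin_cases i <;>
          simp [Matrix.mulVec, dotProduct, Fin.sum_univ_two, hent, hB,
            Matrix.one_apply] <;> field_simp <;> ring
  refine ⟨key, ?_⟩
  rw [key]
  -- value of the (0,1) entry picks out α
  have hval : ∀ α : ℝ, ((1 - α) • (1 : Matrix (Fin 2) (Fin 2) ℝ) + α • B) 0 1 = α := by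
    intro α; rw [hent]; simp [hB, Matrix.one_apply]
  have h1mem : (1 : Matrix (Fin 2) (Fin 2) ℝ) ∈ {M : Matrix (Fin 2) (Fin 2) ℝ |
      ∃ α ∈ Set.Icc (0 : ℝ) 1, M = (1 - α) • (1 : Matrix (Fin 2) (Fin 2) ℝ) + α • B} :=
    ⟨0, ⟨le_refl 0, zero_le_one⟩, by simp⟩
  have hBmem : B ∈ {M : Matrix (Fin 2) (Fin 2) ℝ |
      ∃ α ∈ Set.Icc (0 : ℝ) 1, M = (1 - α) • (1 : Matrix (Fin 2) (Fin 2) ℝ) + α • B} :=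
    ⟨1, ⟨zero_le_one, le_refl 1⟩, by simp⟩
  ext M
  constructor
  · rintro ⟨⟨α, ⟨ha0, ha1⟩, rfl⟩, hext⟩
    rcases eq_or_lt_of_le ha0 with h0 | h0
    · left; rw [← h0]; simp
    rcases eq_or_lt_of_le ha1 with h1 | h1
    · right; rw [h1]; simp
    exfalso
    have hop : (1 - α) • (1 : Matrix (Fin 2) (Fin 2) ℝ) + α • B ∈
        openSegment ℝ (1 : Matrix (Fin 2) (Fin 2) ℝ) B :=
      ⟨1 - α, α, by linarith, h0, by ring, rfl⟩
    have := hext h1mem hBmem hop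
    have h01 := congrFun (congrFun this 0) 1
    rw [hval] at h01
    simp [Matrix.one_apply] at h01
    exact absurd h01.symm (ne_of_gt h0)
  · intro hM
    rcases hM with hM | hM
    · subst hM
      refine ⟨h1mem, ?_⟩
      rintro x ⟨s, ⟨hs0, hs1⟩, rfl⟩ y ⟨t, ⟨ht0, ht1⟩, rfl⟩ ⟨a, b, ha, hb, hab, heq⟩
      have h01 := congrFun (congrFun heq 0) 1
      simp only [Matrix.add_apply, Matrix.smul_apply, smul_eq_mul, hval] at h01
      rw [Matrix.one_apply] at h01
      simp at h01
      -- h01 : a * s + b * t = 0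
      have hs : s = 0 := by nlinarith [mul_nonneg ha.le hs0, mul_nonneg hb.le ht0]
      have ht : t = 0 := by nlinarith [mul_nonneg ha.le hs0, mul_nonneg hb.le ht0]
      subst hs; subst ht
      simp
    · simp only [Set.mem_singleton_iff] at hM
      subst hM
      refine ⟨hBmem, ?_⟩
      rintro x ⟨s, ⟨hs0, hs1⟩, rfl⟩ y ⟨t, ⟨ht0, ht1⟩, rfl⟩ ⟨a, b, ha, hb, hab, heq⟩
      have h01 := congrFun (congrFun heq 0) 1
      simp only [Matrix.add_apply, Matrix.smul_apply, smul_eq_mul, hval] at h01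
      have hB01 : B 0 1 = 1 := by simp [hB]
      rw [hB01] at h01
      -- h01 : a * s + b * t = 1
      have k1 : (0:ℝ) ≤ a * (1 - s) := mul_nonneg ha.le (by linarith)
      have k2 : (0:ℝ) ≤ b * (1 - t) := mul_nonneg hb.le (by linarith)
      have hs : s = 1 := by nlinarith
      have ht : t = 1 := by nlinarith
      subst hs; subst ht
      simp
end

section
/- Let d ≥ 4 and s = (1, q_1, …, q_{d−1}) with 1 > q_1 > q_2 > … > q_{d−1} > 0. Define the d×d matrix T by: column 0 equals (1−q_1, q_1−q_2, …, q_{d−2}−q_{d−1}, q_{d−1})^T, and for 1 ≤ j ≤ d−1 column j is the standard basis vector e_{j−1}. Then T ∈ TP(d,s), T is an extreme point of TP(d,s), and T is not biplanar: for every pair of permutations (π_in, π_out) of {0,…,d−1}, there exist two distinct nonzero entries of the transportation matrix T·diag(s) that cross with respect to (π_in, π_out). -/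
/-- The non-biplanar matrix `T`: column `0` is `(s₀−s₁, s₁−s₂, …, s_{d−2}−s_{d−1},
s_{d−1})ᵀ` and column `j`, for `j ≥ 1`, is the standard basis vector `e_{j−1}`.
(With `s₀ = 1` and `s = (1, q₁, …, q_{d−1})`, column `0` reads
`(1−q₁, q₁−q₂, …, q_{d−2}−q_{d−1}, q_{d−1})ᵀ`.) -/
def Tnb (d : ℕ) (s : Fin d → ℝ) : Matrix (Fin d) (Fin d) ℝ :=
  Matrix.of fun i j =>
    if (j : ℕ) = 0 then
      (if h : (i : ℕ) + 1 < d then s i - s ⟨(i : ℕ) + 1, h⟩ else s i)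
    else if (i : ℕ) + 1 = (j : ℕ) then 1 else 0

namespace Stmt18Aux

variable {d : ℕ} {s : Fin d → ℝ}

lemma tnb_off (i j : Fin d) (hj : (j : ℕ) ≠ 0) (hij : (i : ℕ) + 1 ≠ (j : ℕ)) :
    Tnb d s i j = 0 := by
  simp [Tnb, hj, hij]

lemma tnb_sup (i j : Fin d) (hij : (i : ℕ) + 1 = (j : ℕ)) :
    Tnb d s i j = 1 := by
  have hj : (j : ℕ) ≠ 0 := by omega
  simp [Tnb, hj, hij]

lemma tnb_col0 (i j : Fin d) (hj : (j : ℕ) = 0) :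
    Tnb d s i j = if h : (i : ℕ) + 1 < d then s i - s ⟨(i : ℕ) + 1, h⟩ else s i := by
  simp [Tnb, hj]

/-- Row sum of a pattern-supported matrix times a vector, non-last row. -/
lemma row_sum (hd : 0 < d) (A : Matrix (Fin d) (Fin d) ℝ)
    (hz : ∀ (i j : Fin d), (j : ℕ) ≠ 0 → (i : ℕ) + 1 ≠ (j : ℕ) → A i j = 0)
    (f : Fin d → ℝ) (i : Fin d) (h1 : (i : ℕ) + 1 < d) :
    ∑ j, A i j * f j =
      A i ⟨0, hd⟩ * f ⟨0, hd⟩ + A i ⟨(i : ℕ) + 1, h1⟩ * f ⟨(i : ℕ) + 1, h1⟩ := by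
  classical
  have hne : (⟨0, hd⟩ : Fin d) ≠ ⟨(i : ℕ) + 1, h1⟩ := Fin.ne_of_val_ne (by simp)
  rw [← Finset.sum_subset
      (Finset.subset_univ ({⟨0, hd⟩, ⟨(i : ℕ) + 1, h1⟩} : Finset (Fin d)))
      (fun j _ hj => ?_), Finset.sum_pair hne]
  have hj0 : (j : ℕ) ≠ 0 := by
    intro h
    rw [show j = ⟨0, hd⟩ from Fin.ext h] at hj
    exact hj (Finset.mem_insert_self _ _)
  have hj1 : (i : ℕ) + 1 ≠ (j : ℕ) := by
    intro h
    rw [show j = ⟨(i : ℕ) + 1, h1⟩ from Fin.ext h.symm] at hj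
    exact hj (Finset.mem_insert_of_mem (Finset.mem_singleton_self _))
  rw [hz i j hj0 hj1, zero_mul]

/-- Row sum of a pattern-supported matrix times a vector, last row. -/
lemma row_sum_last (hd : 0 < d) (A : Matrix (Fin d) (Fin d) ℝ)
    (hz : ∀ (i j : Fin d), (j : ℕ) ≠ 0 → (i : ℕ) + 1 ≠ (j : ℕ) → A i j = 0)
    (f : Fin d → ℝ) (i : Fin d) (h1 : ¬ ((i : ℕ) + 1 < d)) :
    ∑ j, A i j * f j = A i ⟨0, hd⟩ * f ⟨0, hd⟩ := by
  classical
  apply Finset.sum_eq_single_of_mem _ (Finset.mem_univ _)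
  intro j _ hj
  have hj0 : (j : ℕ) ≠ 0 := fun h => hj (Fin.ext h)
  have hj1 : (i : ℕ) + 1 ≠ (j : ℕ) := by have := j.isLt; omega
  rw [hz i j hj0 hj1, zero_mul]

lemma col_sum (A : Matrix (Fin d) (Fin d) ℝ)
    (hz : ∀ (i j : Fin d), (j : ℕ) ≠ 0 → (i : ℕ) + 1 ≠ (j : ℕ) → A i j = 0)
    (j : Fin d) (hj : (j : ℕ) ≠ 0) :
    ∑ i, A i j = A ⟨(j : ℕ) - 1, by have := j.isLt; omega⟩ j := by
  classical
  apply Finset.sum_eq_single_of_mem _ (Finset.mem_univ _)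
  intro i _ hi
  refine hz i j hj (fun h => hi (Fin.ext ?_))
  simp only [Fin.val_mk]
  omega

end Stmt18Aux

namespace Stmt18Aux

variable {d : ℕ} {s : Fin d → ℝ}

lemma Zpos (hd0 : 0 < d) (hpos : ∀ i, 0 < s i) : (0 : ℝ) < ∑ k, s k := by
  have : Nonempty (Fin d) := ⟨⟨0, hd0⟩⟩
  exact Finset.sum_pos (fun i _ => hpos i) Finset.univ_nonempty

lemma tnb_mem (hd : 4 ≤ d) (hs0 : s ⟨0, Nat.lt_of_lt_of_le (by norm_num) hd⟩ = 1) (hanti : StrictAnti s)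
    (hpos : ∀ i, 0 < s i) : Tnb d s ∈ TP d s := by
  have hd0 : 0 < d := by omega
  have hz : ∀ (i j : Fin d), (j : ℕ) ≠ 0 → (i : ℕ) + 1 ≠ (j : ℕ) → Tnb d s i j = 0 :=
    fun i j => tnb_off i j
  have hZ : (0:ℝ) < ∑ k, s k := Zpos hd0 hpos
  have hs0' : s ⟨0, hd0⟩ = 1 := hs0
  refine ⟨?_, ?_, ?_⟩
  · intro i j
    rcases eq_or_ne (j : ℕ) 0 with hj | hj
    · rw [tnb_col0 i j hj]
      split_ifs with h
      · have := hanti (show i < ⟨(i:ℕ)+1, h⟩ from by simp [Fin.lt_def])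
        linarith
      · exact (hpos i).le
    · rcases eq_or_ne ((i:ℕ)+1) (j : ℕ) with h | h
      · rw [tnb_sup i j h]; norm_num
      · rw [tnb_off i j hj h]
  · intro j
    rcases eq_or_ne (j : ℕ) 0 with hj | hj
    · set F : ℕ → ℝ := fun n => if h : n < d then s ⟨n, h⟩ else 0 with hF
      have hterm : ∀ i : Fin d, Tnb d s i j = F (i:ℕ) - F ((i:ℕ)+1) := by
        intro i
        rw [tnb_col0 i j hj]
        split_ifs with h
        · simp [hF, i.isLt, h]
        · simp [hF, i.isLt, h]
      calc ∑ i, Tnb d s i j = ∑ i : Fin d, (F (i:ℕ) - F ((i:ℕ)+1)) :=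
            Finset.sum_congr rfl (fun i _ => hterm i)
        _ = ∑ n ∈ Finset.range d, (F n - F (n+1)) :=
            Fin.sum_univ_eq_sum_range (fun n => F n - F (n+1)) d
        _ = F 0 - F d := Finset.sum_range_sub' F d
        _ = 1 := by simp [hF, hd0, hs0']
    · rw [col_sum _ hz j hj, tnb_sup]
      have := j.isLt
      simp only [Fin.val_mk]
      omega
  · funext i
    simp only [Matrix.mulVec, dotProduct]
    by_cases h1 : (i:ℕ)+1 < d
    · rw [row_sum hd0 _ hz _ i h1, tnb_col0 _ _ rfl, dif_pos h1,
        tnb_sup i ⟨(i:ℕ)+1, h1⟩ rfl, hs0']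
      field_simp
      ring
    · rw [row_sum_last hd0 _ hz _ i h1, tnb_col0 _ _ rfl, dif_neg h1, hs0']
      field_simp

lemma eq_tnb (hd : 4 ≤ d) (hs0 : s ⟨0, Nat.lt_of_lt_of_le (by norm_num) hd⟩ = 1) (hanti : StrictAnti s)
    (hpos : ∀ i, 0 < s i) (A : Matrix (Fin d) (Fin d) ℝ) (hA : A ∈ TP d s)
    (hzA : ∀ (i j : Fin d), (j : ℕ) ≠ 0 → (i : ℕ) + 1 ≠ (j : ℕ) → A i j = 0) :
    A = Tnb d s := by
  have hd0 : 0 < d := by omega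
  have hZ : (0:ℝ) < ∑ k, s k := Zpos hd0 hpos
  have hs0' : s ⟨0, hd0⟩ = 1 := hs0
  obtain ⟨hnn, hcol, hmul⟩ := hA
  have hsup : ∀ (i j : Fin d), (i:ℕ)+1 = (j:ℕ) → A i j = 1 := by
    intro i j hij
    have hj : (j : ℕ) ≠ 0 := by omega
    rw [← hcol j, col_sum A hzA j hj]
    congr 1
    exact Fin.ext (by simp; omega)
  ext i j
  rcases eq_or_ne (j : ℕ) 0 with hj | hj
  · have hj' : j = ⟨0, hd0⟩ := Fin.ext hj
    subst hj'
    have hmi := congrFun hmul i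
    simp only [Matrix.mulVec, dotProduct] at hmi
    by_cases h1 : (i:ℕ)+1 < d
    · rw [row_sum hd0 A hzA _ i h1, hsup i ⟨(i:ℕ)+1, h1⟩ rfl, hs0'] at hmi
      rw [tnb_col0 _ _ rfl, dif_pos h1]
      have hZ' : (∑ k, s k) ≠ 0 := ne_of_gt hZ
      field_simp at hmi
      linarith
    · rw [row_sum_last hd0 A hzA _ i h1, hs0'] at hmi
      rw [tnb_col0 _ _ rfl, dif_neg h1]
      have hZ' : (∑ k, s k) ≠ 0 := ne_of_gt hZ
      field_simp at hmi
      linarith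
  · rcases eq_or_ne ((i:ℕ)+1) (j : ℕ) with h | h
    · rw [tnb_sup i j h]
      exact hsup i j h
    · rw [tnb_off i j hj h]
      exact hzA i j hj h

end Stmt18Aux


/-- for `d ≥ 4` and `s = (1, q₁, …, q_{d−1})` with
`1 > q₁ > … > q_{d−1} > 0`, the matrix `Tnb d s` is a thermal process, it is an
extreme point of `TP(d,s)`, and it is not biplanar: for every pair of permutations
`(π_in, π_out)` there are two distinct nonzero entries of the transportation matrix
`T · diag(s)` that cross with respect to `(π_in, π_out)`. -/
theorem stmt18 (d : ℕ) (hd : 4 ≤ d) (s : Fin d → ℝ)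
    (hs0 : s ⟨0, by omega⟩ = 1) (hanti : StrictAnti s) (hpos : ∀ i, 0 < s i) :
    Tnb d s ∈ TP d s ∧
    Tnb d s ∈ Set.extremePoints ℝ (TP d s) ∧
    ∀ πin πout : Equiv.Perm (Fin d),
      ∃ i i' j j' : Fin d, (i, j) ≠ (i', j') ∧
        (Tnb d s * Matrix.diagonal s) i j ≠ 0 ∧
        (Tnb d s * Matrix.diagonal s) i' j' ≠ 0 ∧
        (((πout.symm i : Fin d) : ℤ) - ((πout.symm i' : Fin d) : ℤ)) *
          (((πin.symm j : Fin d) : ℤ) - ((πin.symm j' : Fin d) : ℤ)) < 0 := by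
  have hd0 : 0 < d := by omega
  have hmem := Stmt18Aux.tnb_mem hd hs0 hanti hpos
  refine ⟨hmem, ⟨hmem, ?_⟩, ?_⟩
  · rintro x₁ h₁ x₂ h₂ ⟨a, b, ha, hb, hab, heq⟩
    have hz12 : ∀ (i j : Fin d), (j:ℕ) ≠ 0 → (i:ℕ)+1 ≠ (j:ℕ) →
        x₁ i j = 0 ∧ x₂ i j = 0 := by
      intro i j hj hij
      have h0 : Tnb d s i j = 0 := Stmt18Aux.tnb_off i j hj hij
      have he : a * x₁ i j + b * x₂ i j = 0 := by
        have := congrFun (congrFun heq i) j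
        simpa [Matrix.add_apply, Matrix.smul_apply, smul_eq_mul, h0] using this
      constructor <;> nlinarith [h₁.1 i j, h₂.1 i j]
    exact Stmt18Aux.eq_tnb hd hs0 hanti hpos x₁ h₁ (fun i j hj hij => (hz12 i j hj hij).1)
  · intro πin πout
    by_contra hcon
    push_neg at hcon
    have hcol0 : ∀ i : Fin d, (Tnb d s * Matrix.diagonal s) i ⟨0, hd0⟩ ≠ 0 := by
      intro i
      rw [Matrix.mul_diagonal]
      have h0 : (0:ℝ) < Tnb d s i ⟨0, hd0⟩ := by
        rw [Stmt18Aux.tnb_col0 _ _ rfl]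
        split_ifs with h
        · have := hanti (show i < ⟨(i:ℕ)+1, h⟩ from by simp [Fin.lt_def])
          linarith
        · exact hpos i
      exact (mul_pos h0 (hpos _)).ne'
    have hsupne : ∀ (i : Fin d) (h : (i:ℕ)+1 < d),
        (Tnb d s * Matrix.diagonal s) i ⟨(i:ℕ)+1, h⟩ ≠ 0 := by
      intro i h
      rw [Matrix.mul_diagonal, Stmt18Aux.tnb_sup i _ rfl, one_mul]
      exact (hpos _).ne'
    have htri : ∀ x y : Fin d, x ≠ y →
        ((πout.symm x : Fin d) : ℤ) < ((πout.symm y : Fin d) : ℤ) ∨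
        ((πout.symm y : Fin d) : ℤ) < ((πout.symm x : Fin d) : ℤ) := by
      intro x y hxy
      rcases lt_trichotomy ((πout.symm x : Fin d) : ℤ) ((πout.symm y : Fin d) : ℤ)
        with h | h | h
      · exact Or.inl h
      · have hv : ((πout.symm x : Fin d) : ℕ) = ((πout.symm y : Fin d) : ℕ) := by
          exact_mod_cast h
        exact absurd (πout.symm.injective (Fin.ext hv)) hxy
      · exact Or.inr h
    have step : ∀ a b c : Fin d, ∀ hb : (b:ℕ)+1 < d,
        ((πout.symm a : Fin d) : ℤ) < ((πout.symm b : Fin d) : ℤ) →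
        ((πout.symm b : Fin d) : ℤ) < ((πout.symm c : Fin d) : ℤ) → False := by
      intro a b c hb hab hbc
      have hj1 : ((⟨(b:ℕ)+1, hb⟩ : Fin d) : ℕ) ≠ ((⟨0, hd0⟩ : Fin d) : ℕ) := by simp
      have hne1 : (b, (⟨(b:ℕ)+1, hb⟩ : Fin d)) ≠ (a, (⟨0, hd0⟩ : Fin d)) := by
        intro h
        exact hj1 (congrArg Fin.val (congrArg Prod.snd h))
      have hne2 : (b, (⟨(b:ℕ)+1, hb⟩ : Fin d)) ≠ (c, (⟨0, hd0⟩ : Fin d)) := by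
        intro h
        exact hj1 (congrArg Fin.val (congrArg Prod.snd h))
      have H1 := hcon b a ⟨(b:ℕ)+1, hb⟩ ⟨0, hd0⟩ hne1 (hsupne b hb) (hcol0 a)
      have H2 := hcon b c ⟨(b:ℕ)+1, hb⟩ ⟨0, hd0⟩ hne2 (hsupne b hb) (hcol0 c)
      have e : ((πin.symm ⟨(b:ℕ)+1, hb⟩ : Fin d) : ℤ) =
          ((πin.symm ⟨0, hd0⟩ : Fin d) : ℤ) := by nlinarith
      have ev : ((πin.symm ⟨(b:ℕ)+1, hb⟩ : Fin d) : ℕ) =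
          ((πin.symm ⟨0, hd0⟩ : Fin d) : ℕ) := by exact_mod_cast e
      have := πin.symm.injective (Fin.ext ev)
      exact hj1 (congrArg Fin.val this)
    have h1d : (1:ℕ) < d := by omega
    have h2d : (2:ℕ) < d := by omega
    have h3d : (3:ℕ) < d := by omega
    set r0 : Fin d := ⟨0, hd0⟩
    set r1 : Fin d := ⟨1, h1d⟩
    set r2 : Fin d := ⟨2, h2d⟩
    have hb0 : ((r0:ℕ))+1 < d := by simp [r0]; omega
    have hb1 : ((r1:ℕ))+1 < d := by simp [r1]; omega
    have hb2 : ((r2:ℕ))+1 < d := by simp [r2]; omega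
    have n01 : r0 ≠ r1 := Fin.ne_of_val_ne (by simp [r0, r1])
    have n12 : r1 ≠ r2 := Fin.ne_of_val_ne (by simp [r1, r2])
    have n02 : r0 ≠ r2 := Fin.ne_of_val_ne (by simp [r0, r2])
    rcases htri r0 r1 n01 with h01 | h10 <;> rcases htri r1 r2 n12 with h12 | h21
    · exact step r0 r1 r2 hb1 h01 h12
    · rcases htri r0 r2 n02 with h02 | h20
      · exact step r0 r2 r1 hb2 h02 h21
      · exact step r2 r0 r1 hb0 h20 h01
    · rcases htri r0 r2 n02 with h02 | h20
      · exact step r1 r0 r2 hb0 h10 h02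
      · exact step r1 r2 r0 hb2 h12 h20
    · exact step r2 r1 r0 hb1 h21 h10
end
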